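/- arXiv:1611.04796 — 4 statements merged into one kernel-verified Lean document; each statement's English description precedes it below -/
import Mathlib

section
/- Let V be a free module of rank N over 𝔬_r = 𝔬/𝔭^r (𝔬 a complete DVR with finite residue field, 𝔭 its maximal ideal, r ≥ 1), and let V = V_0 ⊃ V_1 ⊃ ⋯ ⊃ V_e = 0 be a flag of 𝔬_r-submodules with each V_i free for 0 ≤ i ≤ e−1. Define L_{i+ej} = 𝔭^j(V_i + 𝔭V) for 0 ≤ i ≤ e−1 and j ≥ 0. Then V = L_0 ⊃ L_1 ⊃ ⋯ ⊃ L_{er} = 0 is a strictly decreasing chain of 𝔬_r-submodules. -/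
open IsLocalRing

section Aux

variable {O : Type*} [CommRing O] [IsDomain O] [IsDiscreteValuationRing O] {r : ℕ} {ϖ : O}

/-- Ring-level kernel lemma. -/
theorem aux_ring_ker (hϖ : Irreducible ϖ) {j : ℕ} (hj : j < r)
    {c : O ⧸ (maximalIdeal O ^ r)} (hc : (Ideal.Quotient.mk (maximalIdeal O ^ r) ϖ) ^ j * c = 0) :
    ∃ d : O ⧸ (maximalIdeal O ^ r), c = (Ideal.Quotient.mk (maximalIdeal O ^ r) ϖ) * d := by
  obtain ⟨c₀, rfl⟩ := Ideal.Quotient.mk_surjective c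
  have h1 : (Ideal.Quotient.mk (maximalIdeal O ^ r)) (ϖ ^ j * c₀) = 0 := by
    rw [map_mul, map_pow]; exact hc
  rw [Ideal.Quotient.eq_zero_iff_mem, hϖ.maximalIdeal_eq, Ideal.span_singleton_pow,
    Ideal.mem_span_singleton] at h1
  obtain ⟨d₀, hd₀⟩ := h1
  have hne : (ϖ : O) ^ j ≠ 0 := pow_ne_zero _ hϖ.ne_zero
  have hc₀ : c₀ = ϖ ^ (r - j) * d₀ := by
    apply mul_left_cancel₀ hne
    rw [← mul_assoc, ← pow_add, show j + (r - j) = r by omega, hd₀]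
  have hc₀' : c₀ = ϖ * (ϖ ^ (r - j - 1) * d₀) := by
    rw [hc₀, show r - j = (r - j - 1) + 1 by omega, pow_succ', mul_assoc, Nat.add_sub_cancel]
  exact ⟨(Ideal.Quotient.mk (maximalIdeal O ^ r)) (ϖ ^ (r - j - 1) * d₀),
    by rw [hc₀', map_mul]⟩

/-- Module-level kernel lemma for a module with a basis. -/
theorem aux_basis_ker (hϖ : Irreducible ϖ) {M : Type*} [AddCommGroup M]
    [Module (O ⧸ (maximalIdeal O ^ r)) M]
    {ι : Type*} (b : Module.Basis ι (O ⧸ (maximalIdeal O ^ r)) M) {j : ℕ} (hj : j < r)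
    {m : M} (hm : (Ideal.Quotient.mk (maximalIdeal O ^ r) ϖ) ^ j • m = 0) :
    ∃ u : M, m = (Ideal.Quotient.mk (maximalIdeal O ^ r) ϖ) • u := by
  classical
  set p := Ideal.Quotient.mk (maximalIdeal O ^ r) ϖ with hp
  have hrepr : ∀ t : ι, p ^ j * b.repr m t = 0 := by
    intro t
    have h0 : b.repr (p ^ j • m) t = 0 := by rw [hm, map_zero, Finsupp.zero_apply]
    rwa [map_smul, Finsupp.smul_apply, smul_eq_mul] at h0
  have hex : ∀ c : O ⧸ (maximalIdeal O ^ r), ∃ d, p ^ j * c = 0 → c = p * d := by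
    intro c
    by_cases hc : p ^ j * c = 0
    · obtain ⟨d, hd⟩ := aux_ring_ker hϖ hj hc
      exact ⟨d, fun _ => hd⟩
    · exact ⟨0, fun h => absurd h hc⟩
  set g : ι →₀ O ⧸ (maximalIdeal O ^ r) :=
    (b.repr m).mapRange (fun c => if c = 0 then 0 else Classical.choose (hex c))
      (by simp) with hg
  have hpg : p • g = b.repr m := by
    ext t
    rw [Finsupp.smul_apply, hg, Finsupp.mapRange_apply, smul_eq_mul]
    by_cases h0 : b.repr m t = 0
    · rw [h0, if_pos rfl, mul_zero]
    · rw [if_neg h0]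
      exact (Classical.choose_spec (hex (b.repr m t)) (hrepr t)).symm
  refine ⟨b.repr.symm g, ?_⟩
  conv_lhs => rw [← b.repr.symm_apply_apply m, ← hpg]
  rw [map_smul]

end Aux

open Pointwise

/-- The lattice chain `L` attached to a flag of free submodules of a free
`𝔬_r`-module is a strictly decreasing chain from `V = L 0` down to `L (e*r) = 0`. -/
theorem statement_0
    {O : Type*} [CommRing O] [IsDomain O] [IsDiscreteValuationRing O]
    [Finite (IsLocalRing.ResidueField O)]
    (r : ℕ) (hr : 1 ≤ r)
    (V : Type*) [AddCommGroup V] [Module (O ⧸ (maximalIdeal O ^ r)) V]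
    (N : ℕ) (bV : Module.Basis (Fin N) (O ⧸ (maximalIdeal O ^ r)) V)
    (e : ℕ) (he : 1 ≤ e)
    (Vflag : ℕ → Submodule (O ⧸ (maximalIdeal O ^ r)) V)
    (h0 : Vflag 0 = ⊤) (hetop : Vflag e = ⊥)
    (hstrict : ∀ i < e, Vflag (i + 1) < Vflag i)
    (hfree : ∀ i ≤ e - 1, Module.Free (O ⧸ (maximalIdeal O ^ r)) (Vflag i))
    (pr : Ideal (O ⧸ (maximalIdeal O ^ r)))
    (hpr : pr = Ideal.map (Ideal.Quotient.mk (maximalIdeal O ^ r)) (maximalIdeal O))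
    (L : ℕ → Submodule (O ⧸ (maximalIdeal O ^ r)) V)
    (hL : ∀ i < e, ∀ j : ℕ, L (i + e * j) = (pr ^ j) • (Vflag i ⊔ pr • (⊤ : Submodule _ V))) :
    L 0 = ⊤ ∧ L (e * r) = ⊥ ∧ ∀ n < e * r, L (n + 1) < L n := by
  classical
  obtain ⟨ϖ, hϖ⟩ := IsDiscreteValuationRing.exists_irreducible O
  set R := O ⧸ (maximalIdeal O ^ r) with hR
  set p : R := Ideal.Quotient.mk (maximalIdeal O ^ r) ϖ with hp
  -- pr is the span of p
  have hpr_span : pr = Ideal.span {p} := by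
    refine hpr.trans ((congrArg _ hϖ.maximalIdeal_eq).trans ?_)
    rw [Ideal.map_span, Set.image_singleton]
  -- p ^ r = 0
  have hpr0 : p ^ r = 0 := by
    rw [hp, ← map_pow, Ideal.Quotient.eq_zero_iff_mem]
    rw [hϖ.maximalIdeal_eq, Ideal.span_singleton_pow]
    exact Ideal.mem_span_singleton_self _
  -- pr^j • M = p^j • M pointwise
  have hsmul_eq : ∀ (j : ℕ) (M : Submodule R V), pr ^ j • M = p ^ j • M := by
    intro j M
    rw [hpr_span, Ideal.span_singleton_pow, Submodule.ideal_span_singleton_smul]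
  -- membership in pr • M
  have hmem_smul : ∀ (M : Submodule R V) (x : V), x ∈ pr • M ↔ ∃ v ∈ M, p • v = x := by
    intro M x
    rw [show pr • M = pr ^ 1 • M by rw [pow_one], hsmul_eq, pow_one,
      ← SetLike.mem_coe, Submodule.coe_pointwise_smul]
    exact Set.mem_smul_set
  -- pr ≤ jacobson ⊥ in R
  have hpr_jac : pr ≤ Ideal.jacobson (⊥ : Ideal R) := by
    rw [hpr]
    intro x hx
    obtain ⟨a, ha, rfl⟩ := (Ideal.mem_map_iff_of_surjective _
      Ideal.Quotient.mk_surjective).mp hx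
    have haj : a ∈ Ideal.jacobson (⊥ : Ideal O) := IsLocalRing.maximalIdeal_le_jacobson _ ha
    rw [Ideal.mem_jacobson_bot] at haj ⊢
    intro y
    obtain ⟨b, rfl⟩ := Ideal.Quotient.mk_surjective y
    have h := (haj b).map (Ideal.Quotient.mk (maximalIdeal O ^ r))
    rwa [map_add, map_mul, map_one] at h
  -- kernel of p^(r-1) in a free submodule: W ∩ pV ⊆ pW
  have hker_free : ∀ i ≤ e - 1, ∀ x ∈ Vflag i, x ∈ pr • (⊤ : Submodule R V) →
      x ∈ pr • Vflag i := by
    intro i hi x hxW hxp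
    obtain ⟨v, -, hv⟩ := (hmem_smul ⊤ x).mp hxp
    have hx0 : p ^ (r - 1) • x = 0 := by
      rw [← hv, smul_smul, ← pow_succ, show r - 1 + 1 = r by omega, hpr0, zero_smul]
    haveI := hfree i hi
    set b := Module.Free.chooseBasis R (Vflag i)
    have hx0' : p ^ (r - 1) • (⟨x, hxW⟩ : Vflag i) = 0 := by
      apply Subtype.ext
      simpa using hx0
    obtain ⟨u, hu⟩ := aux_basis_ker hϖ b (show r - 1 < r by omega) hx0'
    rw [hmem_smul]
    refine ⟨u.1, u.2, ?_⟩
    have h := congrArg (Subtype.val) hu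
    simpa using h.symm
  -- finite generation
  haveI : IsNoetherianRing R :=
    isNoetherianRing_of_surjective O R (Ideal.Quotient.mk (maximalIdeal O ^ r))
      Ideal.Quotient.mk_surjective
  haveI : Module.Finite R V := Module.Finite.of_basis bV
  have hVfg : ∀ i, (Vflag i).FG := fun i => IsNoetherian.noetherian _
  -- injectivity of p^j-scaling on submodules containing pV
  have hinj : ∀ (j : ℕ), j < r → ∀ (A B : Submodule R V), A ≤ B →
      pr • (⊤ : Submodule R V) ≤ A → pr ^ j • A = pr ^ j • B → A = B := by
    intro j hj A B hAB hpA hsm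
    refine le_antisymm hAB fun x hxB => ?_
    have hx : p ^ j • x ∈ p ^ j • A := by
      rw [← hsmul_eq, hsm, hsmul_eq]
      exact Submodule.smul_mem_pointwise_smul _ _ _ hxB
    rw [← SetLike.mem_coe, Submodule.coe_pointwise_smul] at hx
    obtain ⟨a, haA, ha⟩ := Set.mem_smul_set.mp hx
    have hker : p ^ j • (x - a) = 0 := by
      rw [smul_sub, ha, sub_self]
    obtain ⟨u, hu⟩ := aux_basis_ker hϖ bV hj hker
    have hxa : x - a ∈ A := by
      apply hpA
      rw [hmem_smul]
      exact ⟨u, Submodule.mem_top, hu.symm⟩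
    simpa using A.add_mem hxa haA
  -- L 0 = ⊤
  have hL0 : L 0 = ⊤ := by
    have h := hL 0 (by omega) 0
    simp only [Nat.mul_zero, Nat.add_zero] at h
    rw [h, pow_zero, Ideal.one_eq_top, Submodule.top_smul, h0, top_sup_eq]
  -- pr ^ r = ⊥
  have hprr : pr ^ r = ⊥ := by
    rw [hpr, ← Ideal.map_pow, Ideal.map_quotient_self]
  have hLer : L (e * r) = ⊥ := by
    have h := hL 0 (by omega) r
    simp only [Nat.zero_add] at h
    rw [h, hprr, Submodule.bot_smul]
  refine ⟨hL0, hLer, ?_⟩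
  intro n hn
  set i := n % e with hi
  set j := n / e with hj
  have hie : i < e := Nat.mod_lt _ (by omega)
  have hjr : j < r := by
    rw [hj]
    exact Nat.div_lt_of_lt_mul (by omega)
  have hn_eq : n = i + e * j := by
    rw [hi, hj]; exact (Nat.mod_add_div n e).symm
  have hLn : L n = pr ^ j • (Vflag i ⊔ pr • (⊤ : Submodule R V)) := by
    rw [hn_eq]; exact hL i hie j
  -- strictness reduction
  have hstep : ∀ (A : Submodule R V), A < Vflag i ⊔ pr • (⊤ : Submodule R V) →
      pr • (⊤ : Submodule R V) ≤ A →
      L (n + 1) = pr ^ j • A → L (n + 1) < L n := by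
    intro A hA hpA hLA
    rw [hLA, hLn]
    exact lt_of_le_of_ne (Submodule.smul_mono le_rfl hA.le)
      (fun heq => hA.ne (hinj j hjr A _ hA.le hpA heq))
  by_cases hcase : i + 1 < e
  · -- middle step
    have hLn1 : L (n + 1) = pr ^ j • (Vflag (i + 1) ⊔ pr • (⊤ : Submodule R V)) := by
      rw [show n + 1 = (i + 1) + e * j by omega]; exact hL (i + 1) hcase j
    refine hstep _ (lt_of_le_of_ne (sup_le_sup_right (hstrict i hie).le _)
      fun heq => ?_) le_sup_right hLn1
    have hle : Vflag i ⊔ pr • (⊤ : Submodule R V) ≤ Vflag (i + 1) ⊔ pr • (⊤ : Submodule R V) :=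
      heq.ge
    have hWle : Vflag i ≤ Vflag (i + 1) ⊔ pr • Vflag i := by
      intro w hw
      have hw' : w ∈ Vflag (i + 1) ⊔ pr • (⊤ : Submodule R V) := hle (Submodule.mem_sup_left hw)
      obtain ⟨w', hw'', z, hz, hwz⟩ := Submodule.mem_sup.mp hw'
      have hzW : z ∈ Vflag i := by
        have hzz : z = w - w' := by rw [← hwz, add_sub_cancel_left]
        rw [hzz]
        exact (Vflag i).sub_mem hw ((hstrict i hie).le hw'')
      exact Submodule.mem_sup.mpr ⟨w', hw'', z, hker_free i (by omega) z hzW hz, hwz⟩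
    exact (hstrict i hie).not_ge
      (Submodule.le_of_le_smul_of_le_jacobson_bot (hVfg i) hpr_jac hWle)
  · -- wrap-around step: i = e - 1
    have hie1 : i + 1 = e := by omega
    have hLn1 : L (n + 1) = pr ^ j • (pr • (⊤ : Submodule R V)) := by
      have h1 : n + 1 = 0 + e * (j + 1) := by rw [Nat.mul_succ]; omega
      rw [h1, hL 0 (by omega) (j + 1), h0, top_sup_eq, pow_succ, ← smul_eq_mul, Submodule.smul_assoc]
    refine hstep _ (lt_of_le_of_ne le_sup_right fun heq => ?_) le_rfl hLn1
    have hWle : Vflag i ≤ pr • (⊤ : Submodule R V) := by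
      rw [heq]; exact le_sup_left
    have hWle' : Vflag i ≤ ⊥ ⊔ pr • Vflag i := fun w hw =>
      Submodule.mem_sup_right (hker_free i (by omega) w hw (hWle hw))
    have hbot := Submodule.le_of_le_smul_of_le_jacobson_bot (hVfg i) hpr_jac hWle'
    rw [le_bot_iff] at hbot
    have hlt : Vflag (i + 1) < Vflag i := hstrict i hie
    rw [hie1, hetop, hbot] at hlt
    exact lt_irrefl _ hlt
end

section
/- Let G be a finite group, N ◁ G with G/N elementary abelian p-group, and χ a G-stable one-dimensional character of N. Define h_χ(xN, yN) = χ([x,y]); this is a well-defined alternating bilinear form on G/N. If h_χ is non-degenerate, then there exists a unique irreducible representation η of G whose restriction to N contains χ, and dim η = [G:N]^{1/2}. -/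
open CategoryTheory Module
open scoped commutatorElement

section PartA
variable {G : Type} [Group G] (Nsub : Subgroup G) (hN : Nsub.Normal) (χ : Nsub →* ℂˣ)

theorem chi_eq (a b : G) (ha : a ∈ Nsub) (hb : b ∈ Nsub) (h : a = b) :
    χ ⟨a, ha⟩ = χ ⟨b, hb⟩ := by subst h; rfl

variable (hstab : ∀ (g : G) (n : G) (hn : n ∈ Nsub),
      χ ⟨g * n * g⁻¹, hN.conj_mem n hn g⟩ = χ ⟨n, hn⟩)

include hstab

theorem chi_conj (g a : G) (ha : a ∈ Nsub) (h2 : g * a * g⁻¹ ∈ Nsub) :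
    χ ⟨g * a * g⁻¹, h2⟩ = χ ⟨a, ha⟩ := hstab g a ha

variable (hab : ∀ x y : G, ⁅x, y⁆ ∈ Nsub)
include hab

theorem bilin_right (x y z : G) :
    χ ⟨⁅x, y * z⁆, hab x (y * z)⟩ = χ ⟨⁅x, y⁆, hab x y⟩ * χ ⟨⁅x, z⁆, hab x z⟩ := by
  have h2 : y * ⁅x, z⁆ * y⁻¹ ∈ Nsub := hN.conj_mem _ (hab x z) y
  have key : (⟨⁅x, y * z⁆, hab x (y*z)⟩ : Nsub) = ⟨⁅x, y⁆, hab x y⟩ * ⟨y * ⁅x, z⁆ * y⁻¹, h2⟩ := by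
    ext
    show ⁅x, y * z⁆ = ⁅x, y⁆ * (y * ⁅x, z⁆ * y⁻¹)
    simp only [commutatorElement_def]
    group
  rw [key, map_mul, chi_conj Nsub hN χ hstab y _ (hab x z) h2]

theorem bilin_left (x y z : G) :
    χ ⟨⁅x * y, z⁆, hab (x * y) z⟩ = χ ⟨⁅x, z⁆, hab x z⟩ * χ ⟨⁅y, z⁆, hab y z⟩ := by
  have h2 : x * ⁅y, z⁆ * x⁻¹ ∈ Nsub := hN.conj_mem _ (hab y z) x
  have key : (⟨⁅x * y, z⁆, hab (x*y) z⟩ : Nsub) = ⟨x * ⁅y, z⁆ * x⁻¹, h2⟩ * ⟨⁅x, z⁆, hab x z⟩ := by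
    ext
    show ⁅x * y, z⁆ = (x * ⁅y, z⁆ * x⁻¹) * ⁅x, z⁆
    simp only [commutatorElement_def]
    group
  rw [key, map_mul, chi_conj Nsub hN χ hstab x _ (hab y z) h2, mul_comm]

theorem comm_right_one (x n : G) (hn : n ∈ Nsub) : χ ⟨⁅x, n⁆, hab x n⟩ = 1 := by
  have h2 : x * n * x⁻¹ ∈ Nsub := hN.conj_mem _ hn x
  have key : (⟨⁅x, n⁆, hab x n⟩ : Nsub) = ⟨x * n * x⁻¹, h2⟩ * ⟨n, hn⟩⁻¹ := by
    ext
    show ⁅x, n⁆ = (x * n * x⁻¹) * n⁻¹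
    simp only [commutatorElement_def]
  rw [key, map_mul, map_inv, chi_conj Nsub hN χ hstab x n hn h2, mul_inv_cancel]

theorem comm_left_one (n y : G) (hn : n ∈ Nsub) : χ ⟨⁅n, y⁆, hab n y⟩ = 1 := by
  have hn' : y * n⁻¹ * y⁻¹ ∈ Nsub := hN.conj_mem _ (inv_mem hn) y
  have key : (⟨⁅n, y⁆, hab n y⟩ : Nsub) = ⟨n, hn⟩ * ⟨y * n⁻¹ * y⁻¹, hn'⟩ := by
    ext
    show ⁅n, y⁆ = n * (y * n⁻¹ * y⁻¹)
    simp only [commutatorElement_def]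
    group
  rw [key, map_mul, chi_conj Nsub hN χ hstab y n⁻¹ (inv_mem hn) hn',
    show (⟨n⁻¹, inv_mem hn⟩ : Nsub) = (⟨n, hn⟩ : Nsub)⁻¹ from rfl, map_inv, mul_inv_cancel]

theorem well_defined (x x' y y' : G) (hx : x⁻¹ * x' ∈ Nsub) (hy : y⁻¹ * y' ∈ Nsub) :
    χ ⟨⁅x, y⁆, hab x y⟩ = χ ⟨⁅x', y'⁆, hab x' y'⟩ := by
  have hx' : x' = x * (x⁻¹ * x') := by group
  have hy' : y' = y * (y⁻¹ * y') := by group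
  symm
  calc χ ⟨⁅x', y'⁆, hab x' y'⟩
      = χ ⟨⁅x * (x⁻¹ * x'), y * (y⁻¹ * y')⁆, hab _ _⟩ :=
        chi_eq Nsub χ _ _ _ _ (by rw [← hx', ← hy'])
    _ = χ ⟨⁅x, y⁆, hab x y⟩ := by
        rw [bilin_left Nsub hN χ hstab hab, comm_left_one Nsub hN χ hstab hab _ _ hx, mul_one,
          bilin_right Nsub hN χ hstab hab, comm_right_one Nsub hN χ hstab hab _ _ hy, mul_one]

theorem alternating (x : G) : χ ⟨⁅x, x⁆, hab x x⟩ = 1 := by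
  have : (⟨⁅x, x⁆, hab x x⟩ : Nsub) = 1 := by
    ext; simp
  rw [this, map_one]

end PartA

section Cat
variable {G : Type} [Group G]

theorem fdrep_hom_comm {X Y : FDRep ℂ G} (f : X ⟶ Y) (g : G) (x : X) :
    f.hom (X.ρ g x) = Y.ρ g (f.hom x) := by
  have := f.comm g
  have := congrArg (fun q => q.hom.hom x) this
  simp at this; exact this

theorem fdrep_mono_of_inj {X Y : FDRep ℂ G} (f : X ⟶ Y) (hf : Function.Injective f.hom) :
    Mono f := by
  constructor
  intro Z g h H
  ext z
  have := congrArg (fun q : Z ⟶ Y => q.hom.hom.hom z) H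
  exact hf this

theorem fdrep_inj_of_mono {X Y : FDRep ℂ G} (f : X ⟶ Y) [Mono f] :
    Function.Injective f.hom := by
  have h1 : Mono ((Action.forget (FGModuleCat ℂ) (MonCat.of G)).map f) :=
    inferInstance
  have h2 : Mono ((forget₂ (FGModuleCat ℂ) (ModuleCat ℂ)).map
      ((Action.forget (FGModuleCat ℂ) (MonCat.of G)).map f)) := inferInstance
  rw [ModuleCat.mono_iff_injective] at h2
  exact h2

theorem fdrep_hom_ne_zero {X Y : FDRep ℂ G} (f : X ⟶ Y) (x : X) (hx : f.hom x ≠ 0) :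
    f ≠ 0 := by
  intro h
  subst h
  exact hx rfl

/-- Restriction of a representation to an invariant submodule, as an `FDRep`. -/
noncomputable def subFDRep (X : FDRep ℂ G) (U : Submodule ℂ X) (hU : ∀ g : G, ∀ u ∈ U, X.ρ g u ∈ U) :
    FDRep ℂ G :=
  FDRep.of
    { toFun := fun g => (X.ρ g).restrict (hU g)
      map_one' := by ext u; simp [LinearMap.restrict_apply]
      map_mul' := fun g h => by ext u; simp [LinearMap.restrict_apply] }

theorem subFDRep_ρ (X : FDRep ℂ G) (U : Submodule ℂ X) (hU : ∀ g : G, ∀ u ∈ U, X.ρ g u ∈ U)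
    (g : G) (u : U) : (subFDRep X U hU).ρ g u = ⟨X.ρ g u.1, hU g u.1 u.2⟩ := rfl

/-- The inclusion morphism of a subrepresentation. -/
def subFDRepInc (X : FDRep ℂ G) (U : Submodule ℂ X) (hU : ∀ g : G, ∀ u ∈ U, X.ρ g u ∈ U) :
    subFDRep X U hU ⟶ X where
  hom := FGModuleCat.ofHom U.subtype
  comm := fun g => rfl

theorem subFDRepInc_apply (X : FDRep ℂ G) (U : Submodule ℂ X)
    (hU : ∀ g : G, ∀ u ∈ U, X.ρ g u ∈ U) (u : U) :
    (subFDRepInc X U hU).hom u = (u : X) := rfl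

end Cat

section Cat2
variable {G : Type} [Group G]
theorem exists_simple_subrep (X : FDRep ℂ G) (x : X) (hx : x ≠ 0) :
    ∃ (W : FDRep ℂ G) (ι : W ⟶ X), Simple W ∧ Function.Injective ι.hom ∧ ∃ w : W, w ≠ 0 := by
  haveI : Nontrivial X := nontrivial_of_ne x 0 hx
  set D : Set ℕ := {d | ∃ U : Submodule ℂ X, ((∀ g : G, ∀ u ∈ U, X.ρ g u ∈ U) ∧ U ≠ ⊥) ∧
    finrank ℂ U = d} with hD
  have hDne : D.Nonempty := ⟨finrank ℂ (⊤ : Submodule ℂ X),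
    ⟨⊤, ⟨fun g u _ => Submodule.mem_top,
      by rw [Submodule.ne_bot_iff]; exact ⟨x, Submodule.mem_top, hx⟩⟩, rfl⟩⟩
  obtain ⟨U, ⟨hUinv, hUne⟩, hUd⟩ := Nat.sInf_mem hDne
  obtain ⟨u0, hu0U, hu0⟩ := Submodule.exists_mem_ne_zero_of_ne_bot hUne
  refine ⟨subFDRep X U hUinv, subFDRepInc X U hUinv, ?_, Subtype.val_injective, ⟨u0, hu0U⟩,
    fun h => hu0 (congrArg Subtype.val h)⟩
  constructor
  intro Y f hm
  haveI := hm
  constructor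
  · intro hIso hf0
    have hf0' : ∀ z, (f.hom.hom.hom : Y →ₗ[ℂ] subFDRep X U hUinv) z = 0 := by
      intro z; rw [hf0]; rfl
    have h2 := congrArg (fun q : subFDRep X U hUinv ⟶ subFDRep X U hUinv =>
      (q.hom.hom.hom : subFDRep X U hUinv →ₗ[ℂ] subFDRep X U hUinv)
        (⟨u0, hu0U⟩ : U)) (IsIso.inv_hom_id f).symm
    have h3 : (⟨u0, hu0U⟩ : U)
        = (f.hom.hom.hom : Y →ₗ[ℂ] subFDRep X U hUinv) ((inv f).hom (⟨u0, hu0U⟩ : U)) := h2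
    rw [hf0'] at h3
    exact hu0 (congrArg Subtype.val h3)
  · intro hf0
    have hinj : Function.Injective f.hom := fdrep_inj_of_mono f
    -- the image of `f` inside `X`
    set F := f ≫ subFDRepInc X U hUinv with hF
    set U' : Submodule ℂ X := LinearMap.range (F.hom.hom.hom : Y →ₗ[ℂ] X) with hU'
    have hU'inv : ∀ g : G, ∀ u ∈ U', X.ρ g u ∈ U' := by
      rintro g u ⟨y, rfl⟩
      exact ⟨Y.ρ g y, fdrep_hom_comm F g y⟩
    have hyne : ∃ y : Y, (f.hom.hom.hom : Y →ₗ[ℂ] subFDRep X U hUinv) y ≠ 0 := by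
      by_contra h
      push_neg at h
      apply hf0
      ext y
      exact h y
    have hFy : ∀ y : Y, (F.hom.hom.hom : Y →ₗ[ℂ] X) y
        = ((f.hom.hom.hom : Y →ₗ[ℂ] subFDRep X U hUinv) y : U).1 := fun y => rfl
    have hU'ne : U' ≠ ⊥ := by
      obtain ⟨y, hy⟩ := hyne
      intro hbot
      have hmem : (F.hom.hom.hom : Y →ₗ[ℂ] X) y ∈ U' := LinearMap.mem_range_self _ y
      rw [hbot, Submodule.mem_bot] at hmem
      rw [hFy y] at hmem
      exact hy (Subtype.val_injective hmem)
    have hU'le : U' ≤ U := by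
      rintro u ⟨y, rfl⟩
      show (F.hom.hom.hom : Y →ₗ[ℂ] X) y ∈ U
      rw [hFy y]
      exact ((f.hom.hom.hom : Y →ₗ[ℂ] subFDRep X U hUinv) y : U).2
    have hle1 : finrank ℂ U ≤ finrank ℂ U' := by
      rw [hUd]
      exact Nat.sInf_le ⟨U', ⟨hU'inv, hU'ne⟩, rfl⟩
    have hU'U : U' = U :=
      Submodule.eq_of_le_of_finrank_le hU'le hle1
    have hsurj : Function.Surjective (f.hom.hom.hom : Y →ₗ[ℂ] subFDRep X U hUinv) := by
      intro u
      have hmem : ((show U from u) : X) ∈ U' := by rw [hU'U]; exact (show U from u).2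
      obtain ⟨y, hy⟩ := hmem
      refine ⟨y, ?_⟩
      apply Subtype.val_injective
      rw [← hFy y]
      exact hy
    set e := LinearEquiv.ofBijective (f.hom.hom.hom : Y →ₗ[ℂ] subFDRep X U hUinv) ⟨hinj, hsurj⟩ with he
    refine ⟨⟨⟨FGModuleCat.ofHom e.symm.toLinearMap, fun g => ?_⟩, ?_, ?_⟩⟩
    · ext w
      show e.symm ((subFDRep X U hUinv).ρ g w) = Y.ρ g (e.symm w)
      have : (subFDRep X U hUinv).ρ g w
          = (f.hom.hom.hom : Y →ₗ[ℂ] subFDRep X U hUinv) (Y.ρ g (e.symm w)) := by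
        rw [show (f.hom.hom.hom : Y →ₗ[ℂ] subFDRep X U hUinv) (Y.ρ g (e.symm w))
          = f.hom (Y.ρ g (e.symm w)) from rfl, fdrep_hom_comm f g (e.symm w)]
        congr 1
        exact (e.apply_symm_apply w).symm
      rw [this]
      exact e.symm_apply_apply _
    · ext y
      exact e.symm_apply_apply y
    · ext w
      exact e.apply_symm_apply w

end Cat2

section Cat3
variable {G : Type} [Group G]
theorem chi_eq' (Nsub : Subgroup G) (χ : Nsub →* ℂˣ) (a b : G) (ha : a ∈ Nsub) (hb : b ∈ Nsub)
    (h : a = b) : χ ⟨a, ha⟩ = χ ⟨b, hb⟩ := by subst h; rfl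

variable (Nsub : Subgroup G) (hN : Nsub.Normal) (χ : Nsub →* ℂˣ)
variable (hstab : ∀ (g : G) (n : G) (hn : n ∈ Nsub),
      χ ⟨g * n * g⁻¹, hN.conj_mem n hn g⟩ = χ ⟨n, hn⟩)

include hstab in
theorem simple_eigen_scalar (W : FDRep ℂ G) (hs : Simple W)
    (w : W) (hw : w ≠ 0) (hwe : ∀ n : Nsub, W.ρ (n : G) w = (χ n : ℂ) • w) :
    ∀ (n : Nsub) (v : W), W.ρ (n : G) v = (χ n : ℂ) • v := by
  haveI := hs
  set E : Submodule ℂ W :=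
    { carrier := {v | ∀ n : Nsub, W.ρ (n : G) v = (χ n : ℂ) • v}
      add_mem' := by intro a b ha hb n; rw [map_add, ha n, hb n, smul_add]
      zero_mem' := by intro n; rw [map_zero, smul_zero]
      smul_mem' := by intro c a ha n; rw [map_smul, ha n, smul_comm] } with hEdef
  have hE : ∀ g : G, ∀ v ∈ E, W.ρ g v ∈ E := by
    intro g v hv n
    have hmem : g⁻¹ * (n : G) * g ∈ Nsub := by
      have := hN.conj_mem n n.2 g⁻¹
      simpa using this
    have h1 : W.ρ (n : G) (W.ρ g v) = W.ρ g (W.ρ (g⁻¹ * (n : G) * g) v) := by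
      rw [← Module.End.mul_apply, ← map_mul, ← Module.End.mul_apply, ← map_mul]
      have : (n : G) * g = g * (g⁻¹ * (n : G) * g) := by group
      rw [this]
    have hχ : χ ⟨g⁻¹ * (n : G) * g, hmem⟩ = χ n := by
      have h2 := hstab g⁻¹ (n : G) n.2
      rw [← h2]
      exact chi_eq' Nsub χ _ _ hmem _ (by rw [inv_inv])
    have h3 := hv ⟨g⁻¹ * (n : G) * g, hmem⟩
    show W.ρ (n : G) (W.ρ g v) = (χ n : ℂ) • (W.ρ g v)
    rw [h1, h3, map_smul, hχ]
  set ι := subFDRepInc W E hE with hι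
  haveI : Mono ι := fdrep_mono_of_inj ι Subtype.val_injective
  have hwE : w ∈ E := hwe
  have hne : ι ≠ 0 := fdrep_hom_ne_zero ι (⟨w, hwE⟩ : E) hw
  haveI : IsIso ι := isIso_of_mono_of_nonzero hne
  intro n v
  have h := congrArg (fun q : W ⟶ W => (q.hom.hom.hom : W →ₗ[ℂ] W) v) (IsIso.inv_hom_id ι)
  let u1 : E := (inv ι).hom v
  have h2 : (u1 : W) = v := h
  have h3 := u1.2 n
  rw [h2] at h3
  exact h3

theorem char_on_mem (W : FDRep ℂ G)
    (hsc : ∀ (n : Nsub) (v : W), W.ρ (n : G) v = (χ n : ℂ) • v) (n : Nsub) :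
    W.character (n : G) = (χ n : ℂ) * (finrank ℂ W : ℂ) := by
  have : W.ρ (n : G) = (χ n : ℂ) • (LinearMap.id : W →ₗ[ℂ] W) := by
    ext v; simpa using hsc n v
  show LinearMap.trace ℂ W (W.ρ (n : G)) = _
  rw [this, map_smul, LinearMap.trace_id, smul_eq_mul]

theorem char_mul_mem (W : FDRep ℂ G)
    (hsc : ∀ (n : Nsub) (v : W), W.ρ (n : G) v = (χ n : ℂ) • v) (g : G) (n : Nsub) :
    W.character (g * (n : G)) = (χ n : ℂ) * W.character g := by
  have : W.ρ (g * (n : G)) = (χ n : ℂ) • W.ρ g := by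
    rw [map_mul]
    ext v
    rw [Module.End.mul_apply, hsc n v, map_smul]
    rfl
  show LinearMap.trace ℂ W (W.ρ (g * (n : G))) = _
  rw [this, map_smul, smul_eq_mul]
  rfl

theorem char_vanish (hab : ∀ x y : G, ⁅x, y⁆ ∈ Nsub)
    (hnd : ∀ x : G, (∀ y : G, χ ⟨⁅x, y⁆, hab x y⟩ = 1) → x ∈ Nsub)
    (W : FDRep ℂ G)
    (hsc : ∀ (n : Nsub) (v : W), W.ρ (n : G) v = (χ n : ℂ) • v) (g : G) (hg : g ∉ Nsub) :
    W.character g = 0 := by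
  have hginv : g⁻¹ ∉ Nsub := fun h => hg (by simpa using inv_mem h)
  have hne : ¬ ∀ y, χ ⟨⁅g⁻¹, y⁆, hab g⁻¹ y⟩ = 1 := fun h => hginv (hnd g⁻¹ h)
  push_neg at hne
  obtain ⟨y, hy⟩ := hne
  set m : Nsub := ⟨⁅g⁻¹, y⁆, hab g⁻¹ y⟩ with hm
  have hconj : y * g * y⁻¹ = g * ((m : G)) := by
    show _ = g * ⁅g⁻¹, y⁆
    simp only [commutatorElement_def]
    group
  have h1 : W.character g = (χ m : ℂ) * W.character g := by
    conv_lhs => rw [show W.character g = W.character (y * g * y⁻¹) from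
      (FDRep.char_conj W g y).symm, hconj, char_mul_mem Nsub χ W hsc g m]
  have h2 : ((χ m : ℂ) - 1) * W.character g = 0 := by linear_combination -h1
  rcases mul_eq_zero.mp h2 with h | h
  · exact absurd (Units.ext (sub_eq_zero.mp h)) hy
  · exact h

end Cat3

section Ind
variable {G : Type} [Group G]

theorem chi_eq'' (Nsub : Subgroup G) (χ : Nsub →* ℂˣ) (a b : G) (ha : a ∈ Nsub) (hb : b ∈ Nsub)
    (h : a = b) : χ ⟨a, ha⟩ = χ ⟨b, hb⟩ := by subst h; rfl

variable (Nsub : Subgroup G) (χ : Nsub →* ℂˣ)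

/-- The underlying space of the induced representation: functions `f : G → ℂ` with
`f (g n) = χ(n)⁻¹ f g`. -/
noncomputable def IndCar : Submodule ℂ (G → ℂ) where
  carrier := {f | ∀ (g n : G) (hn : n ∈ Nsub), f (g * n) = ((χ ⟨n, hn⟩)⁻¹ : ℂˣ) * f g}
  add_mem' := by
    intro a b ha hb g n hn
    simp only [Pi.add_apply, ha g n hn, hb g n hn]
    ring
  zero_mem' := by intro g n hn; simp
  smul_mem' := by
    intro c f hf g n hn
    simp only [Pi.smul_apply, hf g n hn, smul_eq_mul]
    ring

/-- Left translation action on `IndCar`. -/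
def indRho : Representation ℂ G (IndCar Nsub χ) where
  toFun g :=
    { toFun := fun f => ⟨fun x => f.1 (g⁻¹ * x), by
        intro y n hn
        simp only
        rw [← mul_assoc]
        exact f.2 (g⁻¹ * y) n hn⟩
      map_add' := fun f1 f2 => by ext x; rfl
      map_smul' := fun c f => by ext x; rfl }
  map_one' := by
    ext f x
    show f.1 (1⁻¹ * x) = f.1 x
    rw [inv_one, one_mul]
  map_mul' := fun g h => by
    ext f x
    show f.1 ((g * h)⁻¹ * x) = f.1 (h⁻¹ * (g⁻¹ * x))
    rw [mul_inv_rev, mul_assoc]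

/-- The induced representation as an `FDRep`. -/
noncomputable def IndV [Fintype G] : FDRep ℂ G := FDRep.of (indRho Nsub χ)

variable (hN : Nsub.Normal)
variable (hstab : ∀ (g : G) (n : G) (hn : n ∈ Nsub),
      χ ⟨g * n * g⁻¹, hN.conj_mem n hn g⟩ = χ ⟨n, hn⟩)

include hN hstab in
theorem ind_eigen [Fintype G] (n : Nsub) (f : IndV Nsub χ) :
    (IndV Nsub χ).ρ (n : G) f = (χ n : ℂ) • f := by
  apply Subtype.ext
  funext x
  show (f : IndCar Nsub χ).1 ((n : G)⁻¹ * x) = (χ n : ℂ) * (f : IndCar Nsub χ).1 x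
  have hmem : x⁻¹ * (n : G)⁻¹ * x ∈ Nsub := by
    have := hN.conj_mem _ (inv_mem n.2) x⁻¹
    simpa using this
  have hx : (n : G)⁻¹ * x = x * (x⁻¹ * (n : G)⁻¹ * x) := by group
  rw [hx, (f : IndCar Nsub χ).2 x _ hmem]
  have hχ : χ ⟨x⁻¹ * (n : G)⁻¹ * x, hmem⟩ = (χ n)⁻¹ := by
    rw [chi_eq'' Nsub χ _ (x⁻¹ * (n : G)⁻¹ * x⁻¹⁻¹)
      hmem (by rw [inv_inv]; exact hmem) (by rw [inv_inv])]
    rw [hstab x⁻¹ ((n : G))⁻¹ (inv_mem n.2)]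
    rw [show (⟨(n : G)⁻¹, inv_mem n.2⟩ : Nsub) = n⁻¹ from rfl, map_inv]
  rw [hχ, inv_inv]

theorem ind_nonzero [Fintype G] : ∃ f : IndV Nsub χ, f ≠ 0 := by
  classical
  refine ⟨⟨fun g => if h : g ∈ Nsub then (((χ ⟨g, h⟩)⁻¹ : ℂˣ) : ℂ) else 0, ?_⟩, ?_⟩
  · intro g n hn
    dsimp only
    by_cases hg : g ∈ Nsub
    · rw [dif_pos hg, dif_pos (mul_mem hg hn)]
      rw [show (⟨g * n, mul_mem hg hn⟩ : Nsub) = ⟨g, hg⟩ * ⟨n, hn⟩ from rfl, map_mul, mul_inv,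
        Units.val_mul]
      ring
    · rw [dif_neg hg, dif_neg, mul_zero]
      intro h
      exact hg (by have := mul_mem h (inv_mem hn); simpa using this)
  · intro h
    have h1 := congrArg (fun q : IndCar Nsub χ => q.1 1) h
    simp only at h1
    rw [dif_pos (one_mem Nsub)] at h1
    exact Units.ne_zero _ h1

end Ind

section Final
variable {G : Type} [Group G]
variable (Nsub : Subgroup G) (hN : Nsub.Normal) (χ : Nsub →* ℂˣ)
variable (hstab : ∀ (g : G) (n : G) (hn : n ∈ Nsub),
      χ ⟨g * n * g⁻¹, hN.conj_mem n hn g⟩ = χ ⟨n, hn⟩)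
variable (hab : ∀ x y : G, ⁅x, y⁆ ∈ Nsub)

open scoped Classical in
include hab in
theorem ortho_calc [Fintype G] [Invertible (Fintype.card G : ℂ)]
    (hnd : ∀ x : G, (∀ y : G, χ ⟨⁅x, y⁆, hab x y⟩ = 1) → x ∈ Nsub)
    (V W : FDRep ℂ G) (hV : Simple V) (hW : Simple W)
    (hscV : ∀ (n : Nsub) (v : V), V.ρ (n : G) v = (χ n : ℂ) • v)
    (hscW : ∀ (n : Nsub) (v : W), W.ρ (n : G) v = (χ n : ℂ) • v) :
    (Nat.card Nsub : ℂ) * (finrank ℂ V) * (finrank ℂ W) =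
      if Nonempty (V ≅ W) then (Fintype.card G : ℂ) else 0 := by
  haveI := hV; haveI := hW
  have HO : ⅟ (Fintype.card G : ℂ) • ∑ g : G, V.character g * W.character g⁻¹ =
      if Nonempty (V ≅ W) then 1 else 0 := by
    haveI : Invertible (Nat.card G : ℂ) := by rw [Nat.card_eq_fintype_card]; assumption
    rw [smul_eq_mul, invOf_eq_inv, ← Nat.card_eq_fintype_card]
    have := FDRep.char_orthonormal V W
    simpa using this
  have hsummand : ∀ g : G, V.character g * W.character g⁻¹ =
      if g ∈ Nsub then ((finrank ℂ V : ℂ) * (finrank ℂ W : ℂ)) else 0 := by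
    intro g
    by_cases hg : g ∈ Nsub
    · rw [if_pos hg]
      have h1 := char_on_mem Nsub χ V hscV ⟨g, hg⟩
      have h2 := char_on_mem Nsub χ W hscW (⟨g, hg⟩ : Nsub)⁻¹
      have h2' : W.character g⁻¹ = ((χ ⟨g, hg⟩ : ℂ))⁻¹ * (finrank ℂ W : ℂ) := by
        rw [show (g⁻¹ : G) = (((⟨g, hg⟩ : Nsub)⁻¹ : Nsub) : G) from rfl, h2, map_inv,
          Units.val_inv_eq_inv_val]
      rw [h1, h2']
      have hu : ((χ ⟨g, hg⟩ : ℂˣ) : ℂ) ≠ 0 := Units.ne_zero _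
      field_simp
    · rw [if_neg hg, char_vanish Nsub χ hab hnd V hscV g hg, zero_mul]
  have hcard : (Finset.univ.filter (fun g : G => g ∈ Nsub)).card = Nat.card Nsub := by
    rw [Nat.card_eq_fintype_card, Fintype.card_subtype]
  have hsum : ∑ g : G, V.character g * W.character g⁻¹ =
      (Nat.card Nsub : ℂ) * (finrank ℂ V) * (finrank ℂ W) := by
    rw [Finset.sum_congr rfl (fun g _ => hsummand g), ← Finset.sum_filter, Finset.sum_const,
      hcard, nsmul_eq_mul, mul_assoc]
  rw [hsum] at HO
  have h3 := congrArg (fun z => (Fintype.card G : ℂ) * z) HO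
  simp only [smul_eq_mul, ← mul_assoc, mul_invOf_self, one_mul] at h3
  rw [h3, mul_ite, mul_one, mul_zero]

include hN hstab hab in
theorem main_exists [Finite G]
    (hnd : ∀ x : G, (∀ y : G, χ ⟨⁅x, y⁆, hab x y⟩ = 1) → x ∈ Nsub) :
    ∃ V : FDRep ℂ G, Simple V ∧
      (∃ v : V, v ≠ 0 ∧ ∀ n : Nsub, V.ρ (n : G) v = (χ n : ℂ) • v) ∧
      (finrank ℂ V) ^ 2 = Nsub.index ∧
      ∀ W : FDRep ℂ G, Simple W →
        (∃ w : W, w ≠ 0 ∧ ∀ n : Nsub, W.ρ (n : G) w = (χ n : ℂ) • w) →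
        Nonempty (W ≅ V) := by
  letI : Fintype G := Fintype.ofFinite G
  haveI : Invertible (Fintype.card G : ℂ) :=
    invertibleOfNonzero (by exact_mod_cast Fintype.card_ne_zero)
  obtain ⟨f, hf⟩ := ind_nonzero Nsub χ
  obtain ⟨V, ι, hsimp, hinj, w0, hw0⟩ := exists_simple_subrep (IndV Nsub χ) f hf
  have hscV : ∀ (n : Nsub) (v : V), V.ρ (n : G) v = (χ n : ℂ) • v := by
    intro n v
    apply hinj
    rw [fdrep_hom_comm ι, ind_eigen Nsub χ hN hstab n, map_smul]
  have hNcard_ne : (Nat.card Nsub : ℂ) ≠ 0 := by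
    exact_mod_cast Nat.card_pos.ne'
  haveI : Nontrivial V := nontrivial_of_ne w0 0 hw0
  have hdV_ne : ((finrank ℂ V : ℕ) : ℂ) ≠ 0 := by
    exact_mod_cast (finrank_pos (R := ℂ) (M := V)).ne'
  refine ⟨V, hsimp, ⟨w0, hw0, fun n => hscV n w0⟩, ?_, ?_⟩
  · have h := ortho_calc Nsub χ hab hnd V V hsimp hsimp hscV hscV
    rw [if_pos ⟨Iso.refl V⟩] at h
    have hGN : Nat.card Nsub * Nsub.index = Fintype.card G := by
      rw [← Nat.card_eq_fintype_card]
      exact Subgroup.card_mul_index Nsub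
    have hC : (Nat.card Nsub : ℂ) * ((finrank ℂ V) ^ 2 : ℕ) =
        (Nat.card Nsub : ℂ) * (Nsub.index : ℕ) := by
      push_cast
      rw [← hGN] at h
      push_cast at h
      linear_combination h
    have := mul_left_cancel₀ hNcard_ne hC
    exact_mod_cast this
  · intro W hWs hWe
    obtain ⟨w, hw, hwe⟩ := hWe
    have hscW := simple_eigen_scalar Nsub hN χ hstab W hWs w hw hwe
    by_cases hiso : Nonempty (W ≅ V)
    · exact hiso
    · exfalso
      have h := ortho_calc Nsub χ hab hnd W V hWs hsimp hscW hscV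
      rw [if_neg hiso] at h
      haveI : Nontrivial W := nontrivial_of_ne w 0 hw
      have hdW_ne : ((finrank ℂ W : ℕ) : ℂ) ≠ 0 := by
        exact_mod_cast (finrank_pos (R := ℂ) (M := W)).ne'
      exact (mul_ne_zero (mul_ne_zero hNcard_ne hdW_ne) hdV_ne) h

end Final

/-- Heisenberg lift.  `G` finite, `N ◁ G` with `G/N` elementary abelian `p`
(encoded as: all commutators and all `p`-th powers lie in `N`), `χ` a `G`-stable linear
character of `N`.  Then `h_χ(xN,yN) = χ([x,y])` is a well-defined alternating bilinear form,
and if it is non-degenerate there is (up to isomorphism) a unique irreducible representation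
of `G` containing `χ` on restriction to `N`, of dimension `[G:N]^{1/2}`. -/
theorem statement_12
    (G : Type) [Group G] [Finite G] (p : ℕ) (hp : p.Prime)
    (Nsub : Subgroup G) (hN : Nsub.Normal)
    (hab : ∀ x y : G, ⁅x, y⁆ ∈ Nsub)
    (hpow : ∀ x : G, x ^ p ∈ Nsub)
    (χ : Nsub →* ℂˣ)
    (hstab : ∀ (g : G) (n : G) (hn : n ∈ Nsub),
      χ ⟨g * n * g⁻¹, hN.conj_mem n hn g⟩ = χ ⟨n, hn⟩) :
    -- well-definedness of `h_χ` on cosets: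
    (∀ x x' y y' : G, x⁻¹ * x' ∈ Nsub → y⁻¹ * y' ∈ Nsub →
      χ ⟨⁅x, y⁆, hab x y⟩ = χ ⟨⁅x', y'⁆, hab x' y'⟩) ∧
    -- bilinearity:
    (∀ x y z : G, χ ⟨⁅x, y * z⁆, hab x (y * z)⟩ = χ ⟨⁅x, y⁆, hab x y⟩ * χ ⟨⁅x, z⁆, hab x z⟩) ∧
    (∀ x y z : G, χ ⟨⁅x * y, z⁆, hab (x * y) z⟩ = χ ⟨⁅x, z⁆, hab x z⟩ * χ ⟨⁅y, z⁆, hab y z⟩) ∧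
    -- alternating:
    (∀ x : G, χ ⟨⁅x, x⁆, hab x x⟩ = 1) ∧
    -- non-degeneracy implies existence and uniqueness of the Heisenberg lift:
    ((∀ x : G, (∀ y : G, χ ⟨⁅x, y⁆, hab x y⟩ = 1) → x ∈ Nsub) →
      ∃ V : FDRep ℂ G, Simple V ∧
        (∃ v : V, v ≠ 0 ∧ ∀ n : Nsub, V.ρ (n : G) v = (χ n : ℂ) • v) ∧
        (Module.finrank ℂ V) ^ 2 = Nsub.index ∧
        ∀ W : FDRep ℂ G, Simple W →
          (∃ w : W, w ≠ 0 ∧ ∀ n : Nsub, W.ρ (n : G) w = (χ n : ℂ) • w) →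
          Nonempty (W ≅ V)) := by
  refine ⟨fun x x' y y' hx hy => well_defined Nsub hN χ hstab hab x x' y y' hx hy,
    bilin_right Nsub hN χ hstab hab, bilin_left Nsub hN χ hstab hab,
    alternating Nsub hN χ hstab hab, fun hnd => main_exists Nsub hN χ hstab hab hnd⟩
end

section
/- Let G be a finite group, N ◁ G with G/N elementary abelian p, χ a G-stable character of N, h_χ(xN,yN) = χ([x,y]) with radical R̄_χ ⊆ G/N, and R_χ ⊆ G its preimage. Then χ extends to R_χ; R_χ is normal in G; every extension χ̃ of χ to R_χ is G-stable; and for any such χ̃ there is a unique irreducible representation η of G containing χ̃, of dimension [G:R_χ]^{1/2}. -/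
open CategoryTheory
open scoped commutatorElement

noncomputable section

lemma heis_exists_root (z : ℂˣ) {n : ℕ} (hn : 0 < n) : ∃ w : ℂˣ, w ^ n = z := by
  obtain ⟨a, ha⟩ := IsAlgClosed.exists_pow_nat_eq (z : ℂ) hn
  have ha0 : a ≠ 0 := by
    intro h
    rw [h, zero_pow hn.ne'] at ha
    exact z.ne_zero ha.symm
  exact ⟨Units.mk0 a ha0, Units.ext (by simpa using ha)⟩

lemma heis_extension (H : Type) [Group H] [Finite H]
    (N : Subgroup H) (χ : N →* ℂˣ)
    (hcomm : ∀ x y : H, ⁅x, y⁆ ∈ N)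
    (hval : ∀ x y : H, χ ⟨⁅x, y⁆, hcomm x y⟩ = 1) :
    ∃ ψ : H →* ℂˣ, ∀ (n : H) (hn : n ∈ N), ψ n = χ ⟨n, hn⟩ := by
  suffices h : ∀ (d : ℕ) (N : Subgroup H) (χ : N →* ℂˣ) (hcomm : ∀ x y : H, ⁅x, y⁆ ∈ N),
      (∀ x y : H, χ ⟨⁅x, y⁆, hcomm x y⟩ = 1) → N.index = d →
      ∃ ψ : H →* ℂˣ, ∀ (n : H) (hn : n ∈ N), ψ n = χ ⟨n, hn⟩ by
    exact h N.index N χ hcomm hval rfl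
  intro d
  induction d using Nat.strong_induction_on with
  | _ d ih =>
  intro N χ hcomm hval hd
  classical
  rcases eq_or_ne N ⊤ with hN | hN
  · subst hN
    refine ⟨χ.comp ((Subgroup.topEquiv (G := H)).symm.toMonoidHom), fun n hn => rfl⟩
  -- pick x ∉ N
  obtain ⟨x, hx⟩ : ∃ x : H, x ∉ N := by
    by_contra h
    push_neg at h
    exact hN ((Subgroup.eq_top_iff' N).mpr h)
  -- conjugation stability
  have hconjmem : ∀ g n : H, n ∈ N → g * n * g⁻¹ ∈ N := by
    intro g n hn
    have h1 : g * n * g⁻¹ = ⁅g, n⁆ * n := by group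
    rw [h1]; exact N.mul_mem (hcomm g n) hn
  have hconjval : ∀ (g n : H) (hn : n ∈ N),
      χ ⟨g * n * g⁻¹, hconjmem g n hn⟩ = χ ⟨n, hn⟩ := by
    intro g n hn
    have h1 : (⟨g * n * g⁻¹, hconjmem g n hn⟩ : N)
        = ⟨⁅g, n⁆, hcomm g n⟩ * ⟨n, hn⟩ := Subtype.ext (by simp only [Subgroup.coe_mul]; group)
    rw [h1, map_mul, hval, one_mul]
  -- minimal positive power of x in N
  have hex : ∃ k : ℕ, 0 < k ∧ x ^ k ∈ N :=
    ⟨orderOf x, orderOf_pos x, by rw [pow_orderOf_eq_one]; exact N.one_mem⟩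
  set n₀ := Nat.find hex with hn₀def
  obtain ⟨hn₀pos, hn₀mem⟩ := Nat.find_spec hex
  have hmin : ∀ k : ℕ, 0 < k → k < n₀ → x ^ k ∉ N := by
    intro k hk hlt hmem
    exact Nat.find_min hex hlt ⟨hk, hmem⟩
  have hn₀mem' : x ^ (n₀ : ℤ) ∈ N := by rw [zpow_natCast]; exact hn₀mem
  have hdvd : ∀ m : ℤ, x ^ m ∈ N ↔ (n₀ : ℤ) ∣ m := by
    intro m
    constructor
    · intro hm
      have hne : (n₀ : ℤ) ≠ 0 := by exact_mod_cast hn₀pos.ne'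
      have hr0 : 0 ≤ m % n₀ := Int.emod_nonneg m hne
      have hrlt : m % n₀ < n₀ := Int.emod_lt_of_pos m (by exact_mod_cast hn₀pos)
      have hrmem : x ^ (m % n₀) ∈ N := by
        have : m % n₀ = m - n₀ * (m / n₀) := by
          rw [Int.emod_def]
        rw [this, zpow_sub, zpow_mul]
        exact N.mul_mem hm (N.inv_mem (N.zpow_mem hn₀mem' _))
      rcases eq_or_lt_of_le hr0 with h0 | hpos
      · exact Int.dvd_of_emod_eq_zero h0.symm
      · exfalso
        refine hmin (m % n₀).toNat (by omega) (by omega) ?_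
        rwa [← zpow_natCast, Int.toNat_of_nonneg hr0]
    · rintro ⟨t, rfl⟩
      rw [zpow_mul]
      exact N.zpow_mem hn₀mem' t
  -- a root c
  obtain ⟨c, hc⟩ := heis_exists_root (χ ⟨x ^ n₀, hn₀mem⟩) hn₀pos
  have hc' : c ^ (n₀ : ℤ) = χ ⟨x ^ (n₀ : ℤ), hn₀mem'⟩ := by
    have h6 : (⟨x ^ (n₀ : ℤ), hn₀mem'⟩ : N) = ⟨x ^ n₀, hn₀mem⟩ := Subtype.ext (zpow_natCast x n₀)
    rw [zpow_natCast, h6, hc]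
  have hcz : ∀ (m : ℤ) (hm : x ^ m ∈ N), c ^ m = χ ⟨x ^ m, hm⟩ := by
    intro m hm
    obtain ⟨t, rfl⟩ := (hdvd m).mp hm
    rw [zpow_mul, hc', ← map_zpow]
    congr 1
    exact Subtype.ext (by push_cast [zpow_mul]; rfl)
  -- the subgroup S
  set S := N ⊔ Subgroup.zpowers x with hSdef
  have hNS : N ≤ S := le_sup_left
  have hxS : x ∈ S := Subgroup.mem_sup_right (Subgroup.mem_zpowers x)
  have hdecomp : ∀ s ∈ S, ∃ n ∈ N, ∃ m : ℤ, s = n * x ^ m := by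
    intro s hs
    let P : Subgroup H :=
      { carrier := {s | ∃ n ∈ N, ∃ m : ℤ, s = n * x ^ m}
        one_mem' := ⟨1, N.one_mem, 0, by simp⟩
        mul_mem' := by
          rintro a b ⟨n, hn, ma, rfl⟩ ⟨n', hn', mb, rfl⟩
          exact ⟨n * (x ^ ma * n' * (x ^ ma)⁻¹),
            N.mul_mem hn (hconjmem _ _ hn'), ma + mb, by
              rw [zpow_add]; group⟩
        inv_mem' := by
          rintro a ⟨n, hn, m, rfl⟩
          refine ⟨(x ^ m)⁻¹ * n⁻¹ * ((x ^ m)⁻¹)⁻¹, hconjmem _ _ (N.inv_mem hn), -m, ?_⟩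
          rw [zpow_neg]; group }
    have hSP : S ≤ P := by
      rw [hSdef]
      refine sup_le (fun n hn => ⟨n, hn, 0, by simp⟩) ?_
      rintro s hs
      obtain ⟨m, rfl⟩ := Subgroup.mem_zpowers_iff.mp hs
      exact ⟨1, N.one_mem, m, by simp⟩
    exact hSP hs
  -- well-definedness
  have welldef : ∀ (n : H) (hn : n ∈ N) (a : ℤ) (n' : H) (hn' : n' ∈ N) (b : ℤ),
      n * x ^ a = n' * x ^ b → χ ⟨n, hn⟩ * c ^ a = χ ⟨n', hn'⟩ * c ^ b := by
    intro n hn a n' hn' b heq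
    have h2 : n'⁻¹ * n = x ^ (b - a) := by
      have h3 := congrArg (fun z => n'⁻¹ * z * (x ^ a)⁻¹) heq
      simp only [mul_assoc, mul_inv_cancel, mul_one, inv_mul_cancel] at h3
      rw [zpow_sub]
      simpa [mul_assoc] using h3
    have hmem : x ^ (b - a) ∈ N := h2 ▸ N.mul_mem (N.inv_mem hn') hn
    have h4 : (χ ⟨n', hn'⟩)⁻¹ * χ ⟨n, hn⟩ = c ^ b * (c ^ a)⁻¹ := by
      have h5 := hcz (b - a) hmem
      have h6 : (⟨x ^ (b - a), hmem⟩ : N) = ⟨n', hn'⟩⁻¹ * ⟨n, hn⟩ := Subtype.ext (by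
        simp only [Subgroup.coe_mul, InvMemClass.coe_inv]
        exact h2.symm)
      rw [h6, map_mul, map_inv] at h5
      rw [← h5, zpow_sub]
    calc χ ⟨n, hn⟩ * c ^ a = χ ⟨n', hn'⟩ * ((χ ⟨n', hn'⟩)⁻¹ * χ ⟨n, hn⟩) * c ^ a := by group
      _ = χ ⟨n', hn'⟩ * (c ^ b * (c ^ a)⁻¹) * c ^ a := by rw [h4]
      _ = χ ⟨n', hn'⟩ * c ^ b := by group
  -- the extension to S
  have hdec : ∀ s : S, ∃ q : N × ℤ, (s : H) = (q.1 : H) * x ^ q.2 := by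
    intro s
    obtain ⟨n, hn, m, hm⟩ := hdecomp s s.2
    exact ⟨(⟨n, hn⟩, m), hm⟩
  let f : S → ℂˣ := fun s => χ (hdec s).choose.1 * c ^ (hdec s).choose.2
  have hf : ∀ (s : S) (n : H) (hn : n ∈ N) (m : ℤ), (s : H) = n * x ^ m →
      f s = χ ⟨n, hn⟩ * c ^ m := by
    intro s n hn m hm
    have h := (hdec s).choose_spec
    exact welldef _ (hdec s).choose.1.2 _ _ hn _ (by rw [← h, hm])
  have hmulS : ∀ s t : S, f (s * t) = f s * f t := by
    intro s t
    obtain ⟨n, hn, a, hs⟩ := hdecomp s s.2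
    obtain ⟨n', hn', b, ht⟩ := hdecomp t t.2
    have hst : ((s * t : S) : H) = (n * (x ^ a * n' * (x ^ a)⁻¹)) * x ^ (a + b) := by
      rw [Subgroup.coe_mul, hs, ht, zpow_add]; group
    rw [hf _ _ (N.mul_mem hn (hconjmem _ _ hn')) _ hst, hf s n hn a hs, hf t n' hn' b ht]
    have h6 : (⟨n * (x ^ a * n' * (x ^ a)⁻¹), N.mul_mem hn (hconjmem _ _ hn')⟩ : N)
        = ⟨n, hn⟩ * ⟨x ^ a * n' * (x ^ a)⁻¹, hconjmem _ _ hn'⟩ := rfl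
    rw [h6, map_mul, hconjval (x ^ a) n' hn', zpow_add]
    simp only [mul_assoc, mul_comm, mul_left_comm]
  let ψS : S →* ℂˣ :=
    { toFun := f
      map_one' := by
        have h7 : ((1 : S) : H) = (1 : H) * x ^ (0 : ℤ) := by simp
        rw [hf 1 1 N.one_mem 0 h7]
        show χ 1 * c ^ (0 : ℤ) = 1
        simp
      map_mul' := hmulS }
  have hψS : ∀ (n : H) (hn : n ∈ N) (hnS : n ∈ S), ψS ⟨n, hnS⟩ = χ ⟨n, hn⟩ := by
    intro n hn hnS
    have h8 : ((⟨n, hnS⟩ : S) : H) = n * x ^ (0 : ℤ) := by simp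
    show f ⟨n, hnS⟩ = _
    rw [hf _ n hn 0 h8]; simp
  -- hypotheses for S
  have hcommS : ∀ a b : H, ⁅a, b⁆ ∈ S := fun a b => hNS (hcomm a b)
  have hvalS : ∀ a b : H, ψS ⟨⁅a, b⁆, hcommS a b⟩ = 1 := by
    intro a b
    rw [hψS _ (hcomm a b) (hcommS a b), hval]
  -- index decreases
  have hSindex : S.index < d := by
    have h9 : N.relIndex S * S.index = N.index := Subgroup.relIndex_mul_index hNS
    have hS0 : S.index ≠ 0 := Subgroup.index_ne_zero_of_finite
    have hrel0 : N.relIndex S ≠ 0 := by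
      intro h0
      rw [h0, zero_mul] at h9
      exact Subgroup.index_ne_zero_of_finite (G := H) (H := N) h9.symm
    have hrel1 : N.relIndex S ≠ 1 := by
      intro h1
      exact hx (Subgroup.relIndex_eq_one.mp h1 hxS)
    have h2le : 2 ≤ N.relIndex S := by omega
    rw [← hd, ← h9]
    calc S.index = 1 * S.index := (one_mul _).symm
      _ < N.relIndex S * S.index := by
          exact (Nat.mul_lt_mul_right (Nat.pos_of_ne_zero hS0)).mpr (by omega)
  obtain ⟨ψ, hψ⟩ := ih S.index hSindex S ψS hcommS hvalS rfl
  exact ⟨ψ, fun n hn => by rw [hψ n (hNS hn), hψS n hn (hNS hn)]⟩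

open CategoryTheory CategoryTheory.Limits Module

noncomputable section

namespace HeisAux

variable {G : Type} [Group G]

/-- The underlying linear map of a morphism of `FDRep`s. -/
def homL {V W : FDRep ℂ G} (f : V ⟶ W) : V →ₗ[ℂ] W := f.hom.hom.hom

lemma homL_comp {V W X : FDRep ℂ G} (f : V ⟶ W) (g : W ⟶ X) :
    homL (f ≫ g) = (homL g).comp (homL f) := rfl

lemma homL_id {V : FDRep ℂ G} : homL (𝟙 V) = LinearMap.id := rfl

lemma homL_zero {V W : FDRep ℂ G} : homL (0 : V ⟶ W) = 0 := by
  rfl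

lemma homL_eq_iff {V W : FDRep ℂ G} (f g : V ⟶ W) : f = g ↔ homL f = homL g := by
  constructor
  · intro h; rw [h]
  · intro h; exact Action.hom_ext _ _ (FGModuleCat.hom_ext h)

lemma homL_equivariant {V W : FDRep ℂ G} (f : V ⟶ W) (g : G) :
    (homL f).comp (V.ρ g) = (W.ρ g).comp (homL f) := by
  have := congrArg (fun φ => φ.hom.hom) (f.comm g); exact this

lemma homL_apply_ρ {V W : FDRep ℂ G} (f : V ⟶ W) (g : G) (v : V) :
    homL f (V.ρ g v) = W.ρ g (homL f v) :=
  LinearMap.congr_fun (homL_equivariant f g) v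

/-- Build a morphism of `FDRep`s from an equivariant linear map. -/
def mkHom {V W : FDRep ℂ G} (f : V →ₗ[ℂ] W)
    (hf : ∀ (g : G) (v : V), f (V.ρ g v) = W.ρ g (f v)) : V ⟶ W where
  hom := ConcreteCategory.ofHom f
  comm := fun g => FGModuleCat.hom_ext (LinearMap.ext fun v => by exact hf g v)

lemma homL_mkHom {V W : FDRep ℂ G} (f : V →ₗ[ℂ] W) (hf) :
    homL (mkHom f hf) = f := rfl

variable {R : Subgroup G} (χe : R →* ℂˣ)

/-- The `χe`-eigenspace of a representation. -/
def eig (W : FDRep ℂ G) : Submodule ℂ W where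
  carrier := {v | ∀ x : R, W.ρ (x : G) v = (χe x : ℂ) • v}
  add_mem' := by
    intro a b ha hb x
    rw [map_add, ha x, hb x, smul_add]
  zero_mem' := by intro x; rw [map_zero, smul_zero]
  smul_mem' := by
    intro t a ha x
    rw [LinearMap.map_smul, ha x, smul_comm]

lemma mem_eig {W : FDRep ℂ G} {v : W} :
    v ∈ eig χe W ↔ ∀ x : R, W.ρ (x : G) v = (χe x : ℂ) • v := Iff.rfl

lemma eig_inv [hRn : R.Normal]
    (hstab : ∀ (g x : G) (hx : x ∈ R) (hgx : g * x * g⁻¹ ∈ R),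
      χe ⟨g * x * g⁻¹, hgx⟩ = χe ⟨x, hx⟩)
    (W : FDRep ℂ G) (g : G) (v : W) (hv : v ∈ eig χe W) : W.ρ g v ∈ eig χe W := by
  rintro ⟨x, hx⟩
  have hmem : g⁻¹ * x * g ∈ R := by
    have := hRn.conj_mem x hx g⁻¹
    simpa using this
  have hmem2 : g * (g⁻¹ * x * g) * g⁻¹ ∈ R := by
    have h : g * (g⁻¹ * x * g) * g⁻¹ = x := by group
    rw [h]; exact hx
  have key : χe ⟨x, hx⟩ = χe ⟨g⁻¹ * x * g, hmem⟩ := by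
    have h3 : (⟨g * (g⁻¹ * x * g) * g⁻¹, hmem2⟩ : R) = ⟨x, hx⟩ := Subtype.ext (by group)
    rw [← h3, hstab g (g⁻¹ * x * g) hmem hmem2]
  have h1 : x * g = g * (g⁻¹ * x * g) := by group
  calc W.ρ x (W.ρ g v) = W.ρ (x * g) v := by rw [map_mul]; rfl
    _ = W.ρ g (W.ρ (g⁻¹ * x * g) v) := by rw [h1, map_mul]; rfl
    _ = W.ρ g ((χe ⟨g⁻¹ * x * g, hmem⟩ : ℂ) • v) := by rw [hv ⟨_, hmem⟩]
    _ = (χe ⟨g⁻¹ * x * g, hmem⟩ : ℂ) • W.ρ g v := by rw [LinearMap.map_smul]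
    _ = (χe ⟨x, hx⟩ : ℂ) • W.ρ g v := by rw [← key]

/-- Subrepresentation on an invariant subspace. -/
def subrep (W : FDRep ℂ G) (p : Submodule ℂ W)
    (hinv : ∀ (g : G) (v : W), v ∈ p → W.ρ g v ∈ p) : FDRep ℂ G :=
  FDRep.of (G := G)
    { toFun := fun g => (W.ρ g).restrict (fun v hv => hinv g v hv)
      map_one' := by
        refine LinearMap.ext fun v => Subtype.ext ?_
        simp [LinearMap.restrict_apply]
      map_mul' := by
        intro g h
        refine LinearMap.ext fun v => Subtype.ext ?_
        simp [LinearMap.restrict_apply, Module.End.mul_apply] }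

/-- Inclusion of a subrepresentation. -/
def incl (W : FDRep ℂ G) (p : Submodule ℂ W)
    (hinv : ∀ (g : G) (v : W), v ∈ p → W.ρ g v ∈ p) : subrep W p hinv ⟶ W :=
  mkHom (p.subtype) (fun _ _ => rfl)

lemma simple_of_minimal {V : FDRep ℂ G} (hnz : ∃ v : V, v ≠ 0)
    (hmin : ∀ q : Submodule ℂ V, (∀ (g : G) (v : V), v ∈ q → V.ρ g v ∈ q) → q = ⊥ ∨ q = ⊤) :
    Simple V := by
  constructor
  intro Y f hf
  constructor
  · intro hiso h0
    obtain ⟨v, hv⟩ := hnz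
    have h1 : homL f (homL (inv f) v) = v := by
      have h2 : homL (inv f ≫ f) = homL (𝟙 V) := by rw [IsIso.inv_hom_id]
      rw [homL_comp, homL_id] at h2
      exact LinearMap.congr_fun h2 v
    have h4 := congrArg homL h0
    rw [homL_zero] at h4
    rw [h4] at h1
    exact hv (by simpa using h1.symm)
  · intro hne
    have hinj : Function.Injective (homL f) := by
      rw [← LinearMap.ker_eq_bot]
      by_contra hker
      obtain ⟨w, hw, hw0⟩ := Submodule.exists_mem_ne_zero_of_ne_bot hker
      have hKinv : ∀ (g : G) (v : Y), v ∈ LinearMap.ker (homL f) →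
          Y.ρ g v ∈ LinearMap.ker (homL f) := by
        intro g v hv
        rw [LinearMap.mem_ker] at hv ⊢
        rw [homL_apply_ρ, hv, map_zero]
      set ι := incl Y _ hKinv with hιdef
      have hcomp : ι ≫ f = 0 := by
        rw [homL_eq_iff, homL_comp, homL_zero]
        refine LinearMap.ext fun v => ?_
        show homL f ((LinearMap.ker (homL f)).subtype v) = 0
        simpa using v.2
      have hι0 : ι = 0 := (cancel_mono f).mp (by rw [hcomp, zero_comp])
      rw [homL_eq_iff, homL_zero] at hι0
      have h2 := LinearMap.congr_fun hι0 ⟨w, hw⟩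
      exact hw0 h2
    have hsurj : Function.Surjective (homL f) := by
      have hrinv : ∀ (g : G) (v : V), v ∈ LinearMap.range (homL f) →
          V.ρ g v ∈ LinearMap.range (homL f) := by
        rintro g v ⟨u, rfl⟩
        exact ⟨Y.ρ g u, homL_apply_ρ f g u⟩
      rcases hmin _ hrinv with h | h
      · exfalso
        apply hne
        rw [homL_eq_iff, homL_zero]
        exact LinearMap.range_eq_bot.mp h
      · exact LinearMap.range_eq_top.mp h
    set e := LinearEquiv.ofBijective (homL f) ⟨hinj, hsurj⟩ with hedef
    have hee : ∀ u : Y, e u = homL f u := fun u => rfl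
    have hcomm : ∀ (g : G) (v : V), e.symm.toLinearMap (V.ρ g v) = Y.ρ g (e.symm.toLinearMap v) := by
      intro g v
      apply hinj
      have h3 : ∀ u : V, homL f (e.symm u) = u := fun u => e.apply_symm_apply u
      show homL f (e.symm (V.ρ g v)) = homL f (Y.ρ g (e.symm v))
      rw [homL_apply_ρ, h3, h3]
    refine ⟨⟨mkHom e.symm.toLinearMap hcomm, ?_, ?_⟩⟩
    · rw [homL_eq_iff, homL_comp, homL_mkHom, homL_id]
      exact LinearMap.ext fun v => e.symm_apply_apply v
    · rw [homL_eq_iff, homL_comp, homL_mkHom, homL_id]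
      exact LinearMap.ext fun v => e.apply_symm_apply v

lemma inv_sub_of_simple {V : FDRep ℂ G} [Simple V] (q : Submodule ℂ V)
    (hq : ∀ (g : G) (v : V), v ∈ q → V.ρ g v ∈ q) : q = ⊥ ∨ q = ⊤ := by
  rcases eq_or_ne q ⊥ with h | h
  · exact Or.inl h
  right
  obtain ⟨w, hw, hw0⟩ := Submodule.exists_mem_ne_zero_of_ne_bot h
  set ι := incl V q hq with hιdef
  haveI hmono : Mono ι := by
    constructor
    intro Z a b hab
    rw [homL_eq_iff] at hab ⊢
    rw [homL_comp, homL_comp] at hab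
    refine LinearMap.ext fun v => ?_
    have h2 := LinearMap.congr_fun hab v
    simp only [LinearMap.comp_apply] at h2
    exact Subtype.ext h2
  have hι0 : ι ≠ 0 := by
    intro h0
    rw [homL_eq_iff, homL_zero] at h0
    have h2 := LinearMap.congr_fun h0 ⟨w, hw⟩
    exact hw0 h2
  have hiso : IsIso ι := (Simple.mono_isIso_iff_nonzero ι).mpr hι0
  rw [Submodule.eq_top_iff']
  intro v
  have h1 : homL (inv ι ≫ ι) = homL (𝟙 V) := by rw [IsIso.inv_hom_id]
  rw [homL_comp, homL_id] at h1
  have h2 := LinearMap.congr_fun h1 v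
  simp only [LinearMap.comp_apply, LinearMap.id_apply] at h2
  have h3 : q.subtype (homL (inv ι) v) = v := h2
  rw [← h3]
  exact (homL (inv ι) v).2

lemma all_eig_of_simple [hRn : R.Normal]
    (hstab : ∀ (g x : G) (hx : x ∈ R) (hgx : g * x * g⁻¹ ∈ R),
      χe ⟨g * x * g⁻¹, hgx⟩ = χe ⟨x, hx⟩)
    (W : FDRep ℂ G) [Simple W] (w : W) (hw : w ≠ 0)
    (hweig : ∀ x : R, W.ρ (x : G) w = (χe x : ℂ) • w) :
    ∀ v : W, v ∈ eig χe W := by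
  have h := inv_sub_of_simple (eig χe W) (fun g v hv => eig_inv χe hstab W g v hv)
  rcases h with h | h
  · exfalso
    have hmem : w ∈ eig χe W := hweig
    rw [h] at hmem
    exact hw (by simpa using hmem)
  · rw [Submodule.eq_top_iff'] at h
    exact h

lemma char_on (W : FDRep ℂ G) (hall : ∀ v : W, v ∈ eig χe W) (x : R) :
    W.character (x : G) = (χe x : ℂ) * (finrank ℂ W) := by
  have h1 : W.ρ (x : G) = (χe x : ℂ) • (1 : W →ₗ[ℂ] W) := by
    refine LinearMap.ext fun v => ?_
    simpa using hall v x
  show LinearMap.trace ℂ W (W.ρ (x : G)) = _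
  rw [h1, map_smul, LinearMap.trace_one, smul_eq_mul]

lemma char_off (W : FDRep ℂ G) (hall : ∀ v : W, v ∈ eig χe W)
    {g : G} (n y : G) (hn : n ∈ R) (hy : y * g * y⁻¹ = g * n) (hne : χe ⟨n, hn⟩ ≠ 1) :
    W.character g = 0 := by
  have h1 : W.character g = W.character (g * n) := by
    rw [← hy, FDRep.char_conj]
  have h3 : W.ρ n = (χe ⟨n, hn⟩ : ℂ) • (1 : W →ₗ[ℂ] W) := by
    refine LinearMap.ext fun v => ?_
    simpa using hall v ⟨n, hn⟩
  have h2 : W.character (g * n) = (χe ⟨n, hn⟩ : ℂ) * W.character g := by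
    show LinearMap.trace ℂ W (W.ρ (g * n)) = _
    rw [map_mul, h3, mul_smul_comm, mul_one, map_smul, smul_eq_mul]
    rfl
  have h4 : ((χe ⟨n, hn⟩ : ℂ) - 1) * W.character g = 0 := by
    rw [sub_mul, one_mul]
    exact sub_eq_zero.mpr (h1.trans h2).symm
  have h5 : (χe ⟨n, hn⟩ : ℂ) - 1 ≠ 0 :=
    sub_ne_zero.mpr (fun hh => hne (Units.val_eq_one.mp hh))
  rcases mul_eq_zero.mp h4 with h | h
  · exact absurd h h5
  · exact h

end HeisAux

namespace HeisAux

open scoped Classical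

lemma core (G : Type) [Group G] [Fintype G] (R : Subgroup G) [hRn : R.Normal]
    (χe : R →* ℂˣ)
    (hstab : ∀ (g x : G) (hx : x ∈ R) (hgx : g * x * g⁻¹ ∈ R),
      χe ⟨g * x * g⁻¹, hgx⟩ = χe ⟨x, hx⟩)
    (hvan : ∀ g : G, g ∉ R → ∃ n y : G, ∃ hn : n ∈ R,
      y * g * y⁻¹ = g * n ∧ χe ⟨n, hn⟩ ≠ 1) :
    ∃ V : FDRep ℂ G, Simple V ∧
      (∃ v : V, v ≠ 0 ∧ ∀ x : R, V.ρ (x : G) v = (χe x : ℂ) • v) ∧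
      (finrank ℂ V) ^ 2 = R.index ∧
      ∀ W : FDRep ℂ G, Simple W →
        (∃ w : W, w ≠ 0 ∧ ∀ x : R, W.ρ (x : G) w = (χe x : ℂ) • w) →
        Nonempty (W ≅ V) := by
  -- the regular representation on `G → ℂ`
  let ρreg : Representation ℂ G (G → ℂ) :=
    { toFun := fun g =>
        { toFun := fun f u => f (u * g)
          map_add' := fun a b => rfl
          map_smul' := fun c a => rfl }
      map_one' := LinearMap.ext fun f => funext fun u => congrArg f (mul_one u)
      map_mul' := fun g h => LinearMap.ext fun f => funext fun u =>
        congrArg f (mul_assoc u g h).symm }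
  let Vreg : FDRep ℂ G := FDRep.of ρreg
  have hVregρ : ∀ (g : G) (f : G → ℂ) (u : G), (Vreg.ρ g f) u = f (u * g) := fun g f u => rfl
  -- the canonical eigenvector
  let f₀ : G → ℂ := fun u => if h : u ∈ R then (χe ⟨u, h⟩ : ℂ) else 0
  have hf₀mem : (f₀ : Vreg) ∈ eig χe Vreg := by
    intro x
    funext u
    by_cases hu : u ∈ R
    · have hux : u * (x : G) ∈ R := R.mul_mem hu x.2
      have h1 : (Vreg.ρ (x : G) f₀) u = (χe ⟨u * x, hux⟩ : ℂ) := by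
        rw [hVregρ]
        simp only [f₀, dif_pos hux]
      have h2 : (⟨u * (x : G), hux⟩ : R) = ⟨u, hu⟩ * x := Subtype.ext rfl
      rw [h1, h2, map_mul]
      show ((χe ⟨u, hu⟩ : ℂˣ) : ℂ) * (χe x : ℂ) = ((χe x : ℂ) • f₀) u
      simp only [Pi.smul_apply, smul_eq_mul, f₀, dif_pos hu]
      ring
    · have hux : u * (x : G) ∉ R := by
        intro h
        exact hu (by simpa using R.mul_mem h (R.inv_mem x.2))
      have h1 : (Vreg.ρ (x : G) f₀) u = 0 := by
        rw [hVregρ]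
        simp only [f₀, dif_neg hux]
      rw [h1]
      show (0 : ℂ) = ((χe x : ℂ) • f₀) u
      simp only [Pi.smul_apply, smul_eq_mul, f₀, dif_neg hu, mul_zero]
  have hf₀ne : (f₀ : Vreg) ≠ 0 := by
    intro h
    have h1 := congrFun h 1
    simp only [f₀, dif_pos R.one_mem, Pi.zero_apply] at h1
    have h2 : (⟨(1 : G), R.one_mem⟩ : R) = 1 := rfl
    rw [h2, map_one] at h1
    simp at h1
  have hE₀inv : ∀ (g : G) (v : Vreg), v ∈ eig χe Vreg → Vreg.ρ g v ∈ eig χe Vreg :=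
    fun g v hv => eig_inv χe hstab Vreg g v hv
  have hE₀ne : eig χe Vreg ≠ ⊥ := by
    intro h
    rw [h] at hf₀mem
    exact hf₀ne (by simpa using hf₀mem)
  -- a minimal invariant nonzero subspace of the eigenspace
  have hPex : ∃ d : ℕ, ∃ p : Submodule ℂ Vreg,
      (∀ (g : G) (v : Vreg), v ∈ p → Vreg.ρ g v ∈ p) ∧ p ≤ eig χe Vreg ∧ p ≠ ⊥ ∧
      finrank ℂ p = d :=
    ⟨finrank ℂ (eig χe Vreg), eig χe Vreg, hE₀inv, le_rfl, hE₀ne, rfl⟩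
  obtain ⟨p, hpinv, hpE, hpne, hpd⟩ := Nat.find_spec hPex
  have hminimal : ∀ q : Submodule ℂ Vreg,
      (∀ (g : G) (v : Vreg), v ∈ q → Vreg.ρ g v ∈ q) → q ≤ eig χe Vreg → q ≠ ⊥ →
      ¬ (finrank ℂ q < finrank ℂ p) := by
    intro q hqinv hqE hqne hlt
    rw [hpd] at hlt
    exact Nat.find_min hPex hlt ⟨q, hqinv, hqE, hqne, rfl⟩
  let V : FDRep ℂ G := subrep Vreg p hpinv
  obtain ⟨w, hwp, hw0⟩ := Submodule.exists_mem_ne_zero_of_ne_bot hpne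
  let v₀ : V := (⟨w, hwp⟩ : p)
  have hv₀ne : v₀ ≠ 0 := by
    intro h
    exact hw0 (congrArg Subtype.val h)
  have hv₀eig : ∀ x : R, V.ρ (x : G) v₀ = (χe x : ℂ) • v₀ := by
    intro x
    exact Subtype.ext ((hpE hwp) x)
  have hsimple : Simple V := by
    apply simple_of_minimal ⟨v₀, hv₀ne⟩
    intro q hq
    have hq'inv : ∀ (g : G) (u : Vreg), u ∈ q.map p.subtype → Vreg.ρ g u ∈ q.map p.subtype := by
      rintro g u ⟨z, hz, rfl⟩
      exact ⟨V.ρ g z, hq g z hz, rfl⟩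
    have hle : q.map p.subtype ≤ p := Submodule.map_subtype_le p q
    rcases eq_or_ne (q.map p.subtype) ⊥ with hb | hb
    · left
      apply Submodule.map_injective_of_injective p.injective_subtype
      rw [hb]; exact (Submodule.map_bot _).symm
    · right
      have hq'E : q.map p.subtype ≤ eig χe Vreg := le_trans hle hpE
      have heq : q.map p.subtype = p := by
        rcases lt_or_eq_of_le hle with hlt | he
        · exact absurd (Submodule.finrank_lt_finrank_of_lt hlt)
            (hminimal _ hq'inv hq'E hb)
        · exact he
      apply Submodule.map_injective_of_injective p.injective_subtype
      rw [heq]; exact (Submodule.map_subtype_top p).symm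
  haveI := hsimple
  have hallV : ∀ u : V, u ∈ eig χe V :=
    all_eig_of_simple χe hstab V v₀ hv₀ne hv₀eig
  -- the summation identity
  have hsum : ∀ (A B : FDRep ℂ G), (∀ u : A, u ∈ eig χe A) → (∀ u : B, u ∈ eig χe B) →
      ∑ g : G, A.character g * B.character g⁻¹ =
      (finrank ℂ A : ℂ) * (finrank ℂ B : ℂ) * (Fintype.card R : ℂ) := by
    intro A B hA hB
    have key : ∀ g : G, A.character g * B.character g⁻¹ =
        if g ∈ R then (finrank ℂ A : ℂ) * (finrank ℂ B : ℂ) else 0 := by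
      intro g
      by_cases hg : g ∈ R
      · rw [if_pos hg]
        have h1 : A.character g = (χe ⟨g, hg⟩ : ℂ) * (finrank ℂ A) :=
          char_on χe A hA ⟨g, hg⟩
        have h2 : B.character g⁻¹ = (χe (⟨g, hg⟩⁻¹ : R) : ℂ) * (finrank ℂ B) :=
          char_on χe B hB (⟨g, hg⟩⁻¹ : R)
        rw [h1, h2]
        have h3 : ((χe ⟨g, hg⟩ : ℂˣ) : ℂ) * ((χe (⟨g, hg⟩⁻¹ : R) : ℂˣ) : ℂ) = 1 := by
          rw [← Units.val_mul, ← map_mul, mul_inv_cancel, map_one, Units.val_one]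
        calc (χe ⟨g, hg⟩ : ℂ) * (finrank ℂ A) * ((χe (⟨g, hg⟩⁻¹ : R) : ℂ) * (finrank ℂ B))
            = ((χe ⟨g, hg⟩ : ℂ) * (χe (⟨g, hg⟩⁻¹ : R) : ℂ)) * ((finrank ℂ A : ℂ) * (finrank ℂ B)) := by
              ring
          _ = (finrank ℂ A : ℂ) * (finrank ℂ B) := by rw [h3, one_mul]
      · rw [if_neg hg]
        obtain ⟨n, y, hn, hy, hne⟩ := hvan g hg
        rw [char_off χe A hA n y hn hy hne, zero_mul]
    rw [Finset.sum_congr rfl (fun g _ => key g)]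
    rw [Finset.sum_ite, Finset.sum_const, Finset.sum_const_zero, add_zero, nsmul_eq_mul]
    have hcard : (Finset.univ.filter (fun g : G => g ∈ R)).card = Fintype.card R := by
      rw [Fintype.card_subtype]
    rw [hcard, mul_comm]
  -- orthonormality, self case
  have hGne : (Nat.card G : ℂ) ≠ 0 := Nat.cast_ne_zero.mpr Nat.card_pos.ne'
  haveI : Invertible (Nat.card G : ℂ) := invertibleOfNonzero hGne
  have horthVV := FDRep.char_orthonormal (k := ℂ) (G := G) V V
  have horth2 : (Nat.card G : ℂ)⁻¹ * ∑ g : G, V.character g * V.character g⁻¹ =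
      (if Nonempty (V ≅ V) then 1 else 0) := horthVV
  rw [if_pos ⟨Iso.refl V⟩] at horth2
  have horth3 := congrArg (fun z => (Nat.card G : ℂ) * z) horth2
  simp only [← mul_assoc, mul_inv_cancel₀ hGne, one_mul, mul_one] at horth3
  rw [Nat.card_eq_fintype_card] at horth3
  rw [hsum V V hallV hallV] at horth3
  -- extract the dimension count
  have hnat : finrank ℂ V * finrank ℂ V * Fintype.card R = Fintype.card G := by
    have := horth3
    exact_mod_cast this
  have hdim : (finrank ℂ V) ^ 2 = R.index := by
    have hcard : Nat.card R * R.index = Nat.card G := Subgroup.card_mul_index R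
    rw [Nat.card_eq_fintype_card, Nat.card_eq_fintype_card] at hcard
    have hRpos : 0 < Fintype.card R := Fintype.card_pos
    have h1 : Fintype.card R * (finrank ℂ V * finrank ℂ V) = Fintype.card R * R.index := by
      rw [hcard, ← hnat]; ring
    have h2 := Nat.eq_of_mul_eq_mul_left hRpos h1
    rw [pow_two, h2]
  refine ⟨V, hsimple, ⟨v₀, hv₀ne, hv₀eig⟩, hdim, ?_⟩
  -- uniqueness
  intro W hWs hWvec
  obtain ⟨w', hw'0, hw'eig⟩ := hWvec
  haveI := hWs
  have hallW : ∀ u : W, u ∈ eig χe W :=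
    all_eig_of_simple χe hstab W w' hw'0 hw'eig
  have horthWV := FDRep.char_orthonormal (k := ℂ) (G := G) W V
  have horthWV2 : (Nat.card G : ℂ)⁻¹ * ∑ g : G, W.character g * V.character g⁻¹ =
      (if Nonempty (W ≅ V) then 1 else 0) := horthWV
  rw [hsum W V hallW hallV] at horthWV2
  by_contra hni
  rw [if_neg hni] at horthWV2
  have hWpos : 0 < finrank ℂ W := by
    haveI : Nontrivial W := nontrivial_of_ne w' 0 hw'0
    exact finrank_pos
  have hVpos : 0 < finrank ℂ V := by
    haveI : Nontrivial V := nontrivial_of_ne v₀ 0 hv₀ne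
    exact finrank_pos
  have hne0 : (finrank ℂ W : ℂ) * (finrank ℂ V : ℂ) * (Fintype.card R : ℂ) ≠ 0 := by
    apply mul_ne_zero
    apply mul_ne_zero
    · exact_mod_cast hWpos.ne'
    · exact_mod_cast hVpos.ne'
    · exact_mod_cast (Fintype.card_pos (α := R)).ne'
  apply hne0
  have h4 := congrArg (fun z => (Nat.card G : ℂ) * z) horthWV2
  simp only [← mul_assoc, mul_inv_cancel₀ hGne, one_mul, mul_zero] at h4
  exact h4


end HeisAux

end

open Module

set_option maxHeartbeats 1000000 in
/-- general Heisenberg lift.  With `G`, `N`, `χ` as in the Heisenberg setting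
and `R = R_χ` the preimage in `G` of the radical of `h_χ`: `χ` extends to `R`; `R` is normal
in `G`; every extension `χ̃` of `χ` to `R` is `G`-stable; and for every such extension there
is a unique irreducible representation of `G` containing it, of dimension `[G:R]^{1/2}`. -/
theorem statement_13
    (G : Type) [Group G] [Finite G] (p : ℕ) (hp : p.Prime)
    (Nsub : Subgroup G) (hN : Nsub.Normal)
    (hab : ∀ x y : G, ⁅x, y⁆ ∈ Nsub)
    (hpow : ∀ x : G, x ^ p ∈ Nsub)
    (χ : Nsub →* ℂˣ)
    (hstab : ∀ (g : G) (n : G) (hn : n ∈ Nsub),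
      χ ⟨g * n * g⁻¹, hN.conj_mem n hn g⟩ = χ ⟨n, hn⟩)
    (R : Subgroup G)
    (hR : ∀ x : G, x ∈ R ↔ ∀ y : G, χ ⟨⁅x, y⁆, hab x y⟩ = 1) :
    -- `N ≤ R` and `χ` extends to `R`:
    Nsub ≤ R ∧
    (∃ χext : R →* ℂˣ, ∀ (n : G) (hn : n ∈ Nsub) (hnR : n ∈ R),
      χext ⟨n, hnR⟩ = χ ⟨n, hn⟩) ∧
    -- `R` is normal in `G`:
    R.Normal ∧
    -- every extension of `χ` to `R` is `G`-stable:
    (∀ χext : R →* ℂˣ,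
      (∀ (n : G) (hn : n ∈ Nsub) (hnR : n ∈ R), χext ⟨n, hnR⟩ = χ ⟨n, hn⟩) →
      ∀ (g x : G) (hx : x ∈ R) (hgx : g * x * g⁻¹ ∈ R),
        χext ⟨g * x * g⁻¹, hgx⟩ = χext ⟨x, hx⟩) ∧
    -- the Heisenberg lift of any extension exists, is unique, and has dimension `[G:R]^{1/2}`:
    (∀ χext : R →* ℂˣ,
      (∀ (n : G) (hn : n ∈ Nsub) (hnR : n ∈ R), χext ⟨n, hnR⟩ = χ ⟨n, hn⟩) →
      ∃ V : FDRep ℂ G, Simple V ∧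
        (∃ v : V, v ≠ 0 ∧ ∀ x : R, V.ρ (x : G) v = (χext x : ℂ) • v) ∧
        (Module.finrank ℂ V) ^ 2 = R.index ∧
        ∀ W : FDRep ℂ G, Simple W →
          (∃ w : W, w ≠ 0 ∧ ∀ x : R, W.ρ (x : G) w = (χext x : ℂ) • w) →
          Nonempty (W ≅ V)) := by
  letI : Fintype G := Fintype.ofFinite G
  -- Part 1 : Nsub ≤ R
  have hNR : Nsub ≤ R := by
    intro n hn
    rw [hR]
    intro y
    have mem1 : y * n⁻¹ * y⁻¹ ∈ Nsub := hN.conj_mem n⁻¹ (Nsub.inv_mem hn) y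
    have h1 : (⟨⁅n, y⁆, hab n y⟩ : Nsub) = ⟨n, hn⟩ * ⟨y * n⁻¹ * y⁻¹, mem1⟩ :=
      Subtype.ext (by simp only [Subgroup.coe_mul]; group)
    rw [h1, map_mul, hstab y n⁻¹ (Nsub.inv_mem hn)]
    have h3 : (⟨n, hn⟩ : Nsub) * ⟨n⁻¹, Nsub.inv_mem hn⟩ = 1 := Subtype.ext (by simp)
    rw [← map_mul, h3, map_one]
  -- Part 3 (proved early) : R is normal
  have hRnormal : R.Normal := by
    constructor
    intro x hx g
    rw [hR]
    intro y
    have hyc : g⁻¹ * y * g ∈ Set.univ := Set.mem_univ _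
    have hmem : g * ⁅x, g⁻¹ * y * g⁆ * g⁻¹ ∈ Nsub := hN.conj_mem _ (hab x (g⁻¹ * y * g)) g
    have h1 : (⟨⁅g * x * g⁻¹, y⁆, hab _ y⟩ : Nsub) = ⟨g * ⁅x, g⁻¹ * y * g⁆ * g⁻¹, hmem⟩ :=
      Subtype.ext (by simp only [commutatorElement_def]; group)
    rw [h1, hstab g ⁅x, g⁻¹ * y * g⁆ (hab x (g⁻¹ * y * g))]
    exact (hR x).mp hx (g⁻¹ * y * g)
  -- Part 2 : χ extends to R
  have hext : ∃ χext : R →* ℂˣ, ∀ (n : G) (hn : n ∈ Nsub) (hnR : n ∈ R),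
      χext ⟨n, hnR⟩ = χ ⟨n, hn⟩ := by
    set e := Subgroup.subgroupOfEquivOfLe hNR with hedef
    set χ' : (Nsub.subgroupOf R) →* ℂˣ := χ.comp e.toMonoidHom with hχ'def
    have hcomm' : ∀ x y : R, ⁅x, y⁆ ∈ Nsub.subgroupOf R := by
      intro x y
      rw [Subgroup.mem_subgroupOf]
      have : ((⁅x, y⁆ : R) : G) = ⁅(x : G), (y : G)⁆ := by
        simp only [commutatorElement_def, Subgroup.coe_mul, Subgroup.coe_inv]
      rw [this]
      exact hab _ _
    have hval' : ∀ x y : R, χ' ⟨⁅x, y⁆, hcomm' x y⟩ = 1 := by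
      intro x y
      have h2 : χ' ⟨⁅x, y⁆, hcomm' x y⟩ = χ ⟨((⁅x, y⁆ : R) : G), (hcomm' x y)⟩ := rfl
      rw [h2]
      have h3 : (⟨((⁅x, y⁆ : R) : G), (hcomm' x y)⟩ : Nsub)
          = ⟨⁅(x : G), (y : G)⁆, hab _ _⟩ := Subtype.ext (by
            simp only [commutatorElement_def, Subgroup.coe_mul, Subgroup.coe_inv])
      rw [h3]
      exact (hR (x : G)).mp x.2 (y : G)
    obtain ⟨ψ, hψ⟩ := heis_extension R (Nsub.subgroupOf R) χ' hcomm' hval'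
    refine ⟨ψ, fun n hn hnR => ?_⟩
    have ht : (⟨n, hnR⟩ : R) ∈ Nsub.subgroupOf R := Subgroup.mem_subgroupOf.mpr hn
    rw [hψ ⟨n, hnR⟩ ht]
    rfl
  -- Part 4 : every extension is G-stable
  have hstable : ∀ χext : R →* ℂˣ,
      (∀ (n : G) (hn : n ∈ Nsub) (hnR : n ∈ R), χext ⟨n, hnR⟩ = χ ⟨n, hn⟩) →
      ∀ (g x : G) (hx : x ∈ R) (hgx : g * x * g⁻¹ ∈ R),
        χext ⟨g * x * g⁻¹, hgx⟩ = χext ⟨x, hx⟩ := by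
    intro χext hextprop g x hx hgx
    have hmemN : ⁅x⁻¹, g⁆ ∈ Nsub := hab x⁻¹ g
    have hmemR : ⁅x⁻¹, g⁆ ∈ R := hNR hmemN
    have h1 : (⟨g * x * g⁻¹, hgx⟩ : R) = ⟨x, hx⟩ * ⟨⁅x⁻¹, g⁆, hmemR⟩ :=
      Subtype.ext (by simp only [Subgroup.coe_mul, commutatorElement_def]; group)
    rw [h1, map_mul, hextprop ⁅x⁻¹, g⁆ hmemN hmemR]
    rw [(hR x⁻¹).mp (R.inv_mem hx) g, mul_one]
  refine ⟨hNR, hext, hRnormal, hstable, ?_⟩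
  -- Part 5 : the Heisenberg lift
  intro χext hextprop
  haveI := hRnormal
  have hstab' : ∀ (g x : G) (hx : x ∈ R) (hgx : g * x * g⁻¹ ∈ R),
      χext ⟨g * x * g⁻¹, hgx⟩ = χext ⟨x, hx⟩ := hstable χext hextprop
  have hvan : ∀ g : G, g ∉ R → ∃ n y : G, ∃ hn : n ∈ R,
      y * g * y⁻¹ = g * n ∧ χext ⟨n, hn⟩ ≠ 1 := by
    intro g hg
    have hginv : g⁻¹ ∉ R := fun h => hg (by simpa using R.inv_mem h)
    rw [hR] at hginv
    push_neg at hginv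
    obtain ⟨y, hy⟩ := hginv
    refine ⟨⁅g⁻¹, y⁆, y, hNR (hab g⁻¹ y), ?_, ?_⟩
    · simp only [commutatorElement_def]; group
    · rw [hextprop ⁅g⁻¹, y⁆ (hab g⁻¹ y) (hNR (hab g⁻¹ y))]
      exact hy
  exact HeisAux.core G R χext hstab' hvan

end
end

section
/- Let r ≥ 3 be odd, l' = (r−1)/2, and β ∈ M_N(𝔬_r) regular with β̄ ∈ M_N(𝔽_q) its reduction. Then the reduction map C_{K^{l'}}(β) → C_{M_N(𝔽_q)}(β̄) sending 1 + ϖ^{l'}x to x̄ is surjective, where K^{l'} = 1 + 𝔭^{l'}M_N(𝔬_r). Consequently, the alternating form h_β(x̄,ȳ) = ψ_β([x,y]) on K^{l'}/(C∩K^{l'})K^l is non-degenerate, where l = l'+1. -/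
open IsLocalRing

theorem st19_cancel {O : Type*} [CommRing O] [IsDomain O] [IsDiscreteValuationRing O]
    {ϖ : O} (hϖ : Irreducible ϖ) {r i j : ℕ} (hij : i + j = r)
    (t : O ⧸ (maximalIdeal O ^ r))
    (h : (Ideal.Quotient.mk (maximalIdeal O ^ r) ϖ) ^ i * t = 0) :
    (Ideal.Quotient.mk (maximalIdeal O ^ r) ϖ) ^ j ∣ t := by
  obtain ⟨t₀, rfl⟩ := Ideal.Quotient.mk_surjective t
  rw [← map_pow, ← map_mul, Ideal.Quotient.eq_zero_iff_mem, hϖ.maximalIdeal_eq,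
    Ideal.span_singleton_pow, Ideal.mem_span_singleton] at h
  obtain ⟨e, he⟩ := h
  have ht₀ : t₀ = ϖ ^ j * e := by
    have hne : (ϖ : O) ^ i ≠ 0 := pow_ne_zero _ hϖ.ne_zero
    apply mul_left_cancel₀ hne
    rw [he, ← hij, pow_add]; ring
  exact ⟨Ideal.Quotient.mk _ e, by rw [ht₀, map_mul, map_pow]⟩

theorem st19_pi_pow_r {O : Type*} [CommRing O] [IsDomain O] [IsDiscreteValuationRing O]
    {ϖ : O} (hϖ : Irreducible ϖ) (r : ℕ) :
    (Ideal.Quotient.mk (maximalIdeal O ^ r) ϖ) ^ r = 0 := by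
  rw [← map_pow, Ideal.Quotient.eq_zero_iff_mem]
  exact Ideal.pow_mem_pow (by rw [hϖ.maximalIdeal_eq]; exact Ideal.mem_span_singleton_self ϖ) r

set_option maxHeartbeats 1000000 in
set_option synthInstance.maxHeartbeats 200000 in
/-- Lemma A: lifting commuting matrices along `π^{r-1}`-torsion, using regularity. -/
theorem st19_lift {O : Type*} [CommRing O] [IsDomain O] [IsDiscreteValuationRing O]
    {ϖ : O} (hϖ : Irreducible ϖ) {r : ℕ} (hr : 1 ≤ r) {N : ℕ}
    {β : Matrix (Fin N) (Fin N) (O ⧸ (maximalIdeal O ^ r))}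
    (b : Module.Basis (Fin N) (O ⧸ (maximalIdeal O ^ r))
      (Subalgebra.centralizer (O ⧸ (maximalIdeal O ^ r))
        ({β} : Set (Matrix (Fin N) (Fin N) (O ⧸ (maximalIdeal O ^ r))))))
    (z : Matrix (Fin N) (Fin N) (O ⧸ (maximalIdeal O ^ r)))
    (hz : ∀ j k, (Ideal.Quotient.mk (maximalIdeal O ^ r) ϖ) ∣ (z * β - β * z) j k) :
    ∃ c : Matrix (Fin N) (Fin N) (O ⧸ (maximalIdeal O ^ r)),
      c * β = β * c ∧
      ∀ j k, (Ideal.Quotient.mk (maximalIdeal O ^ r) ϖ) ∣ (c - z) j k := by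
  set π := Ideal.Quotient.mk (maximalIdeal O ^ r) ϖ with hπ
  have hπr : π ^ r = 0 := st19_pi_pow_r hϖ r
  have hπr' : π ^ (r - 1) * π = 0 := by
    rw [← pow_succ]
    have : r - 1 + 1 = r := by omega
    rw [this, hπr]
  set c₀ := π ^ (r - 1) • z with hc₀
  have hmem : c₀ ∈ Subalgebra.centralizer (O ⧸ (maximalIdeal O ^ r)) ({β} : Set _) := by
    rw [Subalgebra.mem_centralizer_iff]
    intro g hg
    rw [Set.mem_singleton_iff] at hg
    subst hg
    have h0 : g * c₀ - c₀ * g = 0 := by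
      rw [hc₀, Matrix.mul_smul, Matrix.smul_mul, ← smul_sub]
      ext j k
      obtain ⟨t, ht⟩ := hz j k
      rw [Matrix.sub_apply] at ht
      have h1 : (g * z) j k - (z * g) j k = π * (-t) := by rw [mul_neg, ← ht]; ring
      rw [Matrix.smul_apply, Matrix.sub_apply, h1, smul_eq_mul,
        ← mul_assoc, hπr', zero_mul, Matrix.zero_apply]
    exact sub_eq_zero.mp h0
  set e₀ : Subalgebra.centralizer (O ⧸ (maximalIdeal O ^ r)) ({β} : Set _) := ⟨c₀, hmem⟩ with he₀
  have hπe₀ : π • e₀ = 0 := by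
    apply Subtype.ext
    show π • c₀ = 0
    rw [hc₀, smul_smul, mul_comm, hπr', zero_smul]
  have hlam : ∀ i, π * b.repr e₀ i = 0 := by
    intro i
    have h2 : b.repr (π • e₀) = π • b.repr e₀ := map_smul _ _ _
    rw [hπe₀, map_zero] at h2
    have h3 := congrFun (congrArg (⇑) h2.symm) i
    rwa [Finsupp.smul_apply, smul_eq_mul, Finsupp.zero_apply] at h3
  have hμ : ∀ i, ∃ u, b.repr e₀ i = π ^ (r - 1) * u := by
    intro i
    exact st19_cancel hϖ (by omega : 1 + (r - 1) = r) _ (by rw [pow_one]; exact hlam i)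
  choose μ hμ' using hμ
  set cc : Subalgebra.centralizer (O ⧸ (maximalIdeal O ^ r)) ({β} : Set _) := ∑ i, μ i • b i with hcc
  refine ⟨(cc : Matrix (Fin N) (Fin N) (O ⧸ (maximalIdeal O ^ r))), ?_, ?_⟩
  · have := (Subalgebra.mem_centralizer_iff _).mp cc.2 β rfl
    exact this.symm
  · have hsum : (π ^ (r - 1)) • cc = e₀ := by
      rw [hcc, Finset.smul_sum]
      rw [← b.sum_repr e₀]
      refine Finset.sum_congr rfl fun i _ => ?_
      rw [smul_smul, ← hμ' i]
    have hmat : (π ^ (r - 1)) • (cc : Matrix (Fin N) (Fin N) (O ⧸ (maximalIdeal O ^ r))) = π ^ (r - 1) • z := by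
      have := congrArg (Subtype.val) hsum
      rwa [SetLike.val_smul] at this
    intro j k
    have hzero : π ^ (r - 1) * ((cc : Matrix (Fin N) (Fin N) (O ⧸ (maximalIdeal O ^ r))) - z) j k = 0 := by
      have h4 := congrFun (congrFun hmat j) k
      simp only [Matrix.smul_apply, smul_eq_mul] at h4
      rw [Matrix.sub_apply, mul_sub, h4, sub_self]
    have := st19_cancel hϖ (by omega : (r - 1) + 1 = r) _ hzero
    rwa [pow_one] at this

theorem st19_dvd {O : Type*} [CommRing O] [IsDomain O] [IsDiscreteValuationRing O]
    {ϖ : O} (hϖ : Irreducible ϖ) (ψ : AddChar (FractionRing O) ℂ)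
    (hψ2 : ∃ y : FractionRing O,
      (algebraMap O (FractionRing O) ϖ) * y ∈ Set.range (algebraMap O (FractionRing O)) ∧
      ψ y ≠ 1)
    (g : O)
    (hg : ∀ t : O, ψ (algebraMap O (FractionRing O) (g * t) /
      algebraMap O (FractionRing O) ϖ) = 1) :
    ϖ ∣ g := by
  by_cases hmem : g ∈ maximalIdeal O
  · rwa [hϖ.maximalIdeal_eq, Ideal.mem_span_singleton] at hmem
  · exfalso
    obtain ⟨y, ⟨c₀, hc₀⟩, hy⟩ := hψ2
    have hϖK : algebraMap O (FractionRing O) ϖ ≠ 0 := fun h =>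
      hϖ.ne_zero (IsFractionRing.injective O (FractionRing O) (by rw [h, map_zero]))
    have hu : IsUnit g := IsLocalRing.notMem_maximalIdeal.mp hmem
    obtain ⟨ug, rfl⟩ := hu
    have h1 := hg (↑ug⁻¹ * c₀)
    rw [show (↑ug : O) * (↑ug⁻¹ * c₀) = c₀ from ug.mul_inv_cancel_left c₀] at h1
    rw [hc₀, mul_comm, mul_div_assoc, div_self hϖK, mul_one] at h1
    exact hy h1

set_option maxHeartbeats 2000000 in
set_option synthInstance.maxHeartbeats 400000 in
/-- for `r ≥ 3` odd, `l' = (r-1)/2`, `l = l'+1` and `β ∈ M_N(𝔬_r)` regular, the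
reduction map `C_{K^{l'}}(β) → C_{M_N(𝔽_q)}(β̄)`, `1 + ϖ^{l'}x ↦ x̄`, is surjective;
consequently the alternating form `h_β(x̄,ȳ) = ψ_β([x,y])` on `K^{l'}/(C ∩ K^{l'})K^l` is
non-degenerate (any `u ∈ K^{l'}` pairing trivially with all of `K^{l'}` lies in
`(C ∩ K^{l'})K^l`). -/
theorem statement_19
    {O : Type*} [CommRing O] [IsDomain O] [IsDiscreteValuationRing O]
    [Finite (IsLocalRing.ResidueField O)]
    (ϖ : O) (hϖ : Irreducible ϖ)
    (ψ : AddChar (FractionRing O) ℂ)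
    (hψ1 : ∀ a : O, ψ (algebraMap O (FractionRing O) a) = 1)
    (hψ2 : ∃ y : FractionRing O,
      (algebraMap O (FractionRing O) ϖ) * y ∈ Set.range (algebraMap O (FractionRing O)) ∧
      ψ y ≠ 1)
    (r : ℕ) (hr : 3 ≤ r) (hodd : Odd r) (l' l : ℕ) (hl' : l' = (r - 1) / 2) (hl : l = l' + 1)
    (N : ℕ)
    (pr : Ideal (O ⧸ (maximalIdeal O ^ r)))
    (hpr : pr = Ideal.map (Ideal.Quotient.mk (maximalIdeal O ^ r)) (maximalIdeal O))
    (red : (O ⧸ (maximalIdeal O ^ r)) →+* (O ⧸ maximalIdeal O))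
    (hred : red = Ideal.Quotient.factor (S := maximalIdeal O ^ r) (T := maximalIdeal O)
      (Ideal.pow_le_self (by omega)))
    (β : Matrix (Fin N) (Fin N) (O ⧸ (maximalIdeal O ^ r)))
    -- regularity of `β`:
    (hreg : ∃ b : Module.Basis (Fin N) (O ⧸ (maximalIdeal O ^ r))
      (Subalgebra.centralizer (O ⧸ (maximalIdeal O ^ r))
        ({β} : Set (Matrix (Fin N) (Fin N) (O ⧸ (maximalIdeal O ^ r))))), True)
    -- a set-theoretic section used to choose lifts, and the character `ψ_β(1+x) = Ψ β x`:
    (s : (O ⧸ (maximalIdeal O ^ r)) → O)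
    (hs : ∀ a, Ideal.Quotient.mk (maximalIdeal O ^ r) (s a) = a)
    (Ψ : Matrix (Fin N) (Fin N) (O ⧸ (maximalIdeal O ^ r)) →
      Matrix (Fin N) (Fin N) (O ⧸ (maximalIdeal O ^ r)) → ℂ)
    (hΨ : ∀ b x, Ψ b x =
      ψ (algebraMap O (FractionRing O) (Matrix.trace ((b.map s) * (x.map s))) /
        (algebraMap O (FractionRing O) ϖ) ^ r)) :
    -- surjectivity of `C_{K^{l'}}(β) → C_{M_N(𝔽_q)}(β̄)`:
    (∀ ybar : Matrix (Fin N) (Fin N) (O ⧸ maximalIdeal O),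
      ybar * β.map red = β.map red * ybar →
      ∃ x : Matrix (Fin N) (Fin N) (O ⧸ (maximalIdeal O ^ r)),
        (1 + ((Ideal.Quotient.mk (maximalIdeal O ^ r) ϖ) ^ l') • x) * β =
          β * (1 + ((Ideal.Quotient.mk (maximalIdeal O ^ r) ϖ) ^ l') • x) ∧
        x.map red = ybar) ∧
    -- non-degeneracy of `h_β` on `K^{l'}/(C ∩ K^{l'})K^l`:
    (∀ u : (Matrix (Fin N) (Fin N) (O ⧸ (maximalIdeal O ^ r)))ˣ,
      (∀ j k, ((u : Matrix (Fin N) (Fin N) (O ⧸ (maximalIdeal O ^ r))) - 1) j k ∈ pr ^ l') →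
      (∀ v : (Matrix (Fin N) (Fin N) (O ⧸ (maximalIdeal O ^ r)))ˣ,
        (∀ j k, ((v : Matrix (Fin N) (Fin N) (O ⧸ (maximalIdeal O ^ r))) - 1) j k ∈ pr ^ l') →
        Ψ β (((u * v * u⁻¹ * v⁻¹ :
          (Matrix (Fin N) (Fin N) (O ⧸ (maximalIdeal O ^ r)))ˣ) :
          Matrix (Fin N) (Fin N) (O ⧸ (maximalIdeal O ^ r))) - 1) = 1) →
      ∃ c w : (Matrix (Fin N) (Fin N) (O ⧸ (maximalIdeal O ^ r)))ˣ,
        (c : Matrix (Fin N) (Fin N) (O ⧸ (maximalIdeal O ^ r))) * β =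
          β * (c : Matrix (Fin N) (Fin N) (O ⧸ (maximalIdeal O ^ r))) ∧
        (∀ j k, ((c : Matrix (Fin N) (Fin N) (O ⧸ (maximalIdeal O ^ r))) - 1) j k ∈ pr ^ l') ∧
        (∀ j k, ((w : Matrix (Fin N) (Fin N) (O ⧸ (maximalIdeal O ^ r))) - 1) j k ∈ pr ^ l) ∧
        u = c * w) := by
  obtain ⟨r', rfl⟩ : ∃ r', r = r' + 1 := ⟨r - 1, by omega⟩
  obtain ⟨bb, -⟩ := hreg
  obtain ⟨m, hm⟩ := hodd
  have hl'1 : 1 ≤ l' := by omega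
  have hll' : l' + l' = r' := by omega
  set mk : O →+* O ⧸ (maximalIdeal O ^ (r' + 1)) := Ideal.Quotient.mk (maximalIdeal O ^ (r' + 1)) with hmkdef
  set π := mk ϖ with hπdef
  have hπr : π ^ (r' + 1) = 0 := st19_pi_pow_r hϖ (r' + 1)
  have hππ : π ^ r' * π = 0 := by rw [← pow_succ, hπr]
  have hmemiff : ∀ (x : O ⧸ (maximalIdeal O ^ (r' + 1))) (j : ℕ), x ∈ pr ^ j ↔ π ^ j ∣ x := by
    intro x j
    have hsp := congrArg (Ideal.map mk) hϖ.maximalIdeal_eq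
    rw [Ideal.map_span, Set.image_singleton] at hsp
    rw [hpr, hsp, Ideal.span_singleton_pow, Ideal.mem_span_singleton]
  have hredmk : ∀ x : O, red (mk x) = Ideal.Quotient.mk (maximalIdeal O) x := by
    intro x; rw [hred]; exact Ideal.Quotient.factor_mk _ x
  have hredπ : red π = 0 := by
    rw [hπdef, hredmk, Ideal.Quotient.eq_zero_iff_mem]
    rw [hϖ.maximalIdeal_eq]; exact Ideal.mem_span_singleton_self ϖ
  have hker : ∀ x : O ⧸ (maximalIdeal O ^ (r' + 1)), red x = 0 → π ∣ x := by
    intro x hx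
    obtain ⟨x₀, rfl⟩ := Ideal.Quotient.mk_surjective x
    rw [show (Ideal.Quotient.mk (maximalIdeal O ^ (r' + 1)) x₀) = mk x₀ from rfl, hredmk,
      Ideal.Quotient.eq_zero_iff_mem, hϖ.maximalIdeal_eq, Ideal.mem_span_singleton] at hx
    obtain ⟨d, rfl⟩ := hx
    exact ⟨mk d, by rw [hπdef, ← map_mul]⟩
  have hmapmk : ∀ M : Matrix (Fin N) (Fin N) (O ⧸ (maximalIdeal O ^ (r' + 1))),
      (M.map s).map mk = M := by
    intro M; ext j k; exact hs _
  -- PART 1 as a standalone claim (also used in part 2)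
  have part1 : ∀ ybar : Matrix (Fin N) (Fin N) (O ⧸ maximalIdeal O),
      ybar * β.map red = β.map red * ybar →
      ∃ x : Matrix (Fin N) (Fin N) (O ⧸ (maximalIdeal O ^ (r' + 1))),
        x * β = β * x ∧ x.map red = ybar := by
    intro ybar hy
    have hlift : ∀ j k : Fin N, ∃ t : O ⧸ (maximalIdeal O ^ (r' + 1)), red t = ybar j k := by
      intro j k
      obtain ⟨t₀, ht₀⟩ := Ideal.Quotient.mk_surjective (ybar j k)
      exact ⟨mk t₀, by rw [hredmk, ht₀]⟩
    choose z hz using hlift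
    have hzred : (Matrix.of z).map red = ybar := by ext j k; exact hz j k
    have hcz : ∀ j k, π ∣ ((Matrix.of z) * β - β * (Matrix.of z)) j k := by
      intro j k
      apply hker
      have h5 : ((Matrix.of z) * β - β * (Matrix.of z)).map red = 0 := by
        rw [Matrix.map_sub _ (map_sub red), Matrix.map_mul, Matrix.map_mul, hzred, hy, sub_self]
      have h6 := congrFun (congrFun h5 j) k
      simpa [Matrix.map_apply] using h6
    obtain ⟨c, hcβ, hcz'⟩ := st19_lift hϖ (by omega) bb (Matrix.of z) hcz
    refine ⟨c, hcβ, ?_⟩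
    ext j k
    obtain ⟨t, ht⟩ := hcz' j k
    have h7 : c j k = z j k + π * t := by
      rw [Matrix.sub_apply] at ht
      simp only [Matrix.of_apply] at ht
      linear_combination ht
    rw [Matrix.map_apply, h7, map_add, map_mul, hredπ, zero_mul, add_zero, hz]
  constructor
  · intro ybar hy
    obtain ⟨x, hx1, hx2⟩ := part1 ybar hy
    refine ⟨x, ?_, hx2⟩
    rw [add_mul, mul_add, one_mul, mul_one, Matrix.smul_mul, Matrix.mul_smul, hx1]
  · intro u hu hpair
    have ha' : ∀ j k, ∃ t, ((u : Matrix (Fin N) (Fin N) (O ⧸ (maximalIdeal O ^ (r' + 1)))) - 1) j k = π ^ l' * t :=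
      fun j k => (hmemiff _ _).mp (hu j k)
    choose a ha0 using ha'
    obtain ⟨aM, ha⟩ : ∃ aM : Matrix (Fin N) (Fin N) (O ⧸ (maximalIdeal O ^ (r' + 1))),
        ∀ j k, ((u : Matrix (Fin N) (Fin N) (O ⧸ (maximalIdeal O ^ (r' + 1)))) - 1) j k
          = π ^ l' * aM j k := ⟨Matrix.of a, fun j k => ha0 j k⟩
    have hU1 : (u : Matrix (Fin N) (Fin N) (O ⧸ (maximalIdeal O ^ (r' + 1)))) = 1 + π ^ l' • aM := by
      ext j k
      have h8 := ha j k
      rw [Matrix.sub_apply] at h8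
      rw [Matrix.add_apply, Matrix.smul_apply, smul_eq_mul]
      linear_combination h8
    have hnil : ∀ M : Matrix (Fin N) (Fin N) (O ⧸ (maximalIdeal O ^ (r' + 1))),
        IsUnit (1 + π ^ l' • M) := by
      intro M
      refine IsNilpotent.isUnit_one_add ⟨r' + 1, ?_⟩
      rw [smul_pow, ← pow_mul]
      have h9 : l' * (r' + 1) = (r' + 1) + (l' * (r' + 1) - (r' + 1)) := by
        have := Nat.le_mul_of_pos_left (r' + 1) (show 0 < l' by omega)
        omega
      have h10 : (π : O ⧸ (maximalIdeal O ^ (r' + 1))) ^ (l' * (r' + 1)) = 0 := by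
        calc π ^ (l' * (r' + 1)) = π ^ (r' + 1) * π ^ (l' * (r' + 1) - (r' + 1)) := by
              rw [← pow_add, ← h9]
        _ = 0 := by rw [hπr, zero_mul]
      rw [h10, zero_smul]
    -- entries of inverses
    have hinvdvd : ∀ w : (Matrix (Fin N) (Fin N) (O ⧸ (maximalIdeal O ^ (r' + 1))))ˣ,
        (∀ j k, π ∣ ((w : Matrix (Fin N) (Fin N) (O ⧸ (maximalIdeal O ^ (r' + 1)))) - 1) j k) →
        (∀ j k, π ∣ (((w⁻¹ : _ˣ) : Matrix (Fin N) (Fin N) (O ⧸ (maximalIdeal O ^ (r' + 1)))) - 1) j k) := by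
      intro w hw j k
      have he : ((w⁻¹ : _ˣ) : Matrix (Fin N) (Fin N) (O ⧸ (maximalIdeal O ^ (r' + 1)))) - 1 =
          -(((w⁻¹ : _ˣ) : Matrix (Fin N) (Fin N) (O ⧸ (maximalIdeal O ^ (r' + 1)))) * ((w : Matrix (Fin N) (Fin N) (O ⧸ (maximalIdeal O ^ (r' + 1)))) - 1)) := by
        rw [mul_sub, w.inv_mul, mul_one, neg_sub]
      rw [he, Matrix.neg_apply, Matrix.mul_apply]
      refine dvd_neg.mpr (Finset.dvd_sum fun i _ => ?_)
      exact (hw i k).mul_left _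
    have hudvd : ∀ j k, π ∣ ((u : Matrix (Fin N) (Fin N) (O ⧸ (maximalIdeal O ^ (r' + 1)))) - 1) j k := by
      intro j k
      rw [ha j k]
      exact ((dvd_pow_self π (show l' ≠ 0 by omega)).mul_right _)
    -- the key: β commutes with aM mod p
    set Bs := β.map s with hBs
    set As := aM.map s with hAs
    set Gm := Bs * As - As * Bs with hGm
    have hFC : ∀ Cm : Matrix (Fin N) (Fin N) O,
        ψ (algebraMap O (FractionRing O) ((Gm * Cm).trace) /
          algebraMap O (FractionRing O) ϖ) = 1 := by
      intro Cm
      obtain ⟨bM, hbM⟩ : ∃ bM : Matrix (Fin N) (Fin N) (O ⧸ (maximalIdeal O ^ (r' + 1))),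
          bM = Cm.map mk := ⟨_, rfl⟩
      have hvu := hnil bM
      have hV : (hvu.unit : Matrix (Fin N) (Fin N) (O ⧸ (maximalIdeal O ^ (r' + 1)))) = 1 + π ^ l' • bM := hvu.unit_spec
      have hventries : ∀ j k, ((hvu.unit : Matrix (Fin N) (Fin N) (O ⧸ (maximalIdeal O ^ (r' + 1)))) - 1) j k ∈ pr ^ l' := by
        intro j k
        rw [hmemiff, hV, add_sub_cancel_left]
        exact ⟨bM j k, by rw [Matrix.smul_apply, smul_eq_mul]⟩
      have hΨ1 := hpair hvu.unit hventries
      -- commutator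
      have hvdvd : ∀ j k, π ∣ ((hvu.unit : Matrix (Fin N) (Fin N) (O ⧸ (maximalIdeal O ^ (r' + 1)))) - 1) j k := by
        intro j k
        rw [hV, add_sub_cancel_left, Matrix.smul_apply, smul_eq_mul]
        exact ((dvd_pow_self π (show l' ≠ 0 by omega)).mul_right _)
      have hWdvd : ∀ j k, π ∣ ((((u⁻¹ : _ˣ) : Matrix (Fin N) (Fin N) (O ⧸ (maximalIdeal O ^ (r' + 1)))) *
          ((hvu.unit⁻¹ : _ˣ) : Matrix (Fin N) (Fin N) (O ⧸ (maximalIdeal O ^ (r' + 1))))) - 1) j k := by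
        intro j k
        have hsplit : (((u⁻¹ : _ˣ) : Matrix (Fin N) (Fin N) (O ⧸ (maximalIdeal O ^ (r' + 1)))) *
            ((hvu.unit⁻¹ : _ˣ) : Matrix (Fin N) (Fin N) (O ⧸ (maximalIdeal O ^ (r' + 1))))) - 1 =
            (((u⁻¹ : _ˣ) : Matrix (Fin N) (Fin N) (O ⧸ (maximalIdeal O ^ (r' + 1)))) - 1) *
              ((hvu.unit⁻¹ : _ˣ) : Matrix (Fin N) (Fin N) (O ⧸ (maximalIdeal O ^ (r' + 1)))) +
            (((hvu.unit⁻¹ : _ˣ) : Matrix (Fin N) (Fin N) (O ⧸ (maximalIdeal O ^ (r' + 1)))) - 1) := by noncomm_ring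
        rw [hsplit, Matrix.add_apply, Matrix.mul_apply]
        refine dvd_add (Finset.dvd_sum fun i _ => ?_) (hinvdvd hvu.unit hvdvd j k)
        exact (hinvdvd u hudvd j i).mul_right _
      have h2 : (hvu.unit : Matrix (Fin N) (Fin N) (O ⧸ (maximalIdeal O ^ (r' + 1)))) * (u : Matrix (Fin N) (Fin N) (O ⧸ (maximalIdeal O ^ (r' + 1)))) *
          (((u⁻¹ : _ˣ) : Matrix (Fin N) (Fin N) (O ⧸ (maximalIdeal O ^ (r' + 1)))) *
            ((hvu.unit⁻¹ : _ˣ) : Matrix (Fin N) (Fin N) (O ⧸ (maximalIdeal O ^ (r' + 1))))) = 1 := by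
        calc (hvu.unit : Matrix (Fin N) (Fin N) (O ⧸ (maximalIdeal O ^ (r' + 1)))) * (u : Matrix (Fin N) (Fin N) (O ⧸ (maximalIdeal O ^ (r' + 1)))) *
            (((u⁻¹ : _ˣ) : Matrix (Fin N) (Fin N) (O ⧸ (maximalIdeal O ^ (r' + 1)))) *
              ((hvu.unit⁻¹ : _ˣ) : Matrix (Fin N) (Fin N) (O ⧸ (maximalIdeal O ^ (r' + 1)))))
            = (hvu.unit : Matrix (Fin N) (Fin N) (O ⧸ (maximalIdeal O ^ (r' + 1)))) *
              ((u : Matrix (Fin N) (Fin N) (O ⧸ (maximalIdeal O ^ (r' + 1)))) * ((u⁻¹ : _ˣ) : Matrix (Fin N) (Fin N) (O ⧸ (maximalIdeal O ^ (r' + 1))))) *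
              ((hvu.unit⁻¹ : _ˣ) : Matrix (Fin N) (Fin N) (O ⧸ (maximalIdeal O ^ (r' + 1)))) := by noncomm_ring
        _ = 1 := by rw [u.mul_inv, mul_one, hvu.unit.mul_inv]
      have hcomm1 : ((↑(u * hvu.unit * u⁻¹ * hvu.unit⁻¹) : Matrix (Fin N) (Fin N) (O ⧸ (maximalIdeal O ^ (r' + 1))))) - 1 =
          ((u : Matrix (Fin N) (Fin N) (O ⧸ (maximalIdeal O ^ (r' + 1)))) * (hvu.unit : Matrix (Fin N) (Fin N) (O ⧸ (maximalIdeal O ^ (r' + 1)))) -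
            (hvu.unit : Matrix (Fin N) (Fin N) (O ⧸ (maximalIdeal O ^ (r' + 1)))) * (u : Matrix (Fin N) (Fin N) (O ⧸ (maximalIdeal O ^ (r' + 1))))) *
          (((u⁻¹ : _ˣ) : Matrix (Fin N) (Fin N) (O ⧸ (maximalIdeal O ^ (r' + 1)))) *
            ((hvu.unit⁻¹ : _ˣ) : Matrix (Fin N) (Fin N) (O ⧸ (maximalIdeal O ^ (r' + 1))))) := by
        simp only [Units.val_mul]
        rw [sub_mul, h2]
        noncomm_ring
      have e1 : (π ^ l' • aM) * (π ^ l' • bM) = π ^ r' • (aM * bM) := by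
        rw [smul_mul_smul_comm, ← pow_add, hll']
      have e2 : (π ^ l' • bM) * (π ^ l' • aM) = π ^ r' • (bM * aM) := by
        rw [smul_mul_smul_comm, ← pow_add, hll']
      have h3 : (u : Matrix (Fin N) (Fin N) (O ⧸ (maximalIdeal O ^ (r' + 1)))) * (hvu.unit : Matrix (Fin N) (Fin N) (O ⧸ (maximalIdeal O ^ (r' + 1)))) -
          (hvu.unit : Matrix (Fin N) (Fin N) (O ⧸ (maximalIdeal O ^ (r' + 1)))) * (u : Matrix (Fin N) (Fin N) (O ⧸ (maximalIdeal O ^ (r' + 1)))) =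
          π ^ r' • (aM * bM - bM * aM) := by
        have expand : ∀ X Y : Matrix (Fin N) (Fin N) (O ⧸ (maximalIdeal O ^ (r' + 1))),
            (1 + X) * (1 + Y) = 1 + X + Y + X * Y := by
          intro X Y
          rw [mul_add, mul_one, add_mul, one_mul, ← add_assoc]
        have h3a : (1 + π ^ l' • aM) * (1 + π ^ l' • bM) - (1 + π ^ l' • bM) * (1 + π ^ l' • aM)
            = (π ^ l' • aM) * (π ^ l' • bM) - (π ^ l' • bM) * (π ^ l' • aM) := by
          rw [expand, expand]
          abel
        rw [hU1, hV, h3a, e1, e2, ← smul_sub]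
      have hXzero : π ^ r' • ((aM * bM - bM * aM) *
          ((((u⁻¹ : _ˣ) : Matrix (Fin N) (Fin N) (O ⧸ (maximalIdeal O ^ (r' + 1)))) *
            ((hvu.unit⁻¹ : _ˣ) : Matrix (Fin N) (Fin N) (O ⧸ (maximalIdeal O ^ (r' + 1))))) - 1)) = 0 := by
        ext j k
        rw [Matrix.smul_apply, smul_eq_mul, Matrix.mul_apply, Finset.mul_sum, Matrix.zero_apply]
        refine Finset.sum_eq_zero fun i _ => ?_
        obtain ⟨t, ht⟩ := hWdvd i k
        rw [ht]
        linear_combination ((aM * bM - bM * aM) j i * t) * hππ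
      have hC2 : ((↑(u * hvu.unit * u⁻¹ * hvu.unit⁻¹) : Matrix (Fin N) (Fin N) (O ⧸ (maximalIdeal O ^ (r' + 1))))) - 1 =
          π ^ r' • (aM * bM - bM * aM) := by
        rw [hcomm1, h3, Matrix.smul_mul]
        have hD : (aM * bM - bM * aM) * (((u⁻¹ : _ˣ) : Matrix (Fin N) (Fin N) (O ⧸ (maximalIdeal O ^ (r' + 1)))) *
            ((hvu.unit⁻¹ : _ˣ) : Matrix (Fin N) (Fin N) (O ⧸ (maximalIdeal O ^ (r' + 1))))) =
            (aM * bM - bM * aM) + (aM * bM - bM * aM) *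
              ((((u⁻¹ : _ˣ) : Matrix (Fin N) (Fin N) (O ⧸ (maximalIdeal O ^ (r' + 1)))) *
                ((hvu.unit⁻¹ : _ˣ) : Matrix (Fin N) (Fin N) (O ⧸ (maximalIdeal O ^ (r' + 1))))) - 1) := by noncomm_ring
        rw [hD, smul_add, hXzero, add_zero]
      rw [hC2, hΨ] at hΨ1
      -- now massage hΨ1 into the desired form
      have trace_mk : ∀ M : Matrix (Fin N) (Fin N) O, mk M.trace = (M.map mk).trace := by
        intro M
        simp [Matrix.trace, Matrix.diag, map_sum, Matrix.map_apply]
      have hmk1 : mk ((Bs * ((π ^ r' • (aM * bM - bM * aM)).map s)).trace)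
          = π ^ r' * ((β * (aM * bM - bM * aM)).trace) := by
        rw [trace_mk, Matrix.map_mul, hmapmk, hmapmk, Matrix.mul_smul, Matrix.trace_smul,
          smul_eq_mul]
      have hmk2 : mk (ϖ ^ r' * (Bs * (As * Cm - Cm * As)).trace)
          = π ^ r' * ((β * (aM * bM - bM * aM)).trace) := by
        have hsubmap : (As * Cm - Cm * As).map mk = aM * bM - bM * aM := by
          rw [Matrix.map_sub _ (map_sub mk), Matrix.map_mul, Matrix.map_mul, hmapmk, hbM]
        rw [map_mul, map_pow, trace_mk, Matrix.map_mul, hmapmk, hsubmap]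
      obtain ⟨e, he⟩ : ϖ ^ (r' + 1) ∣ ((Bs * ((π ^ r' • (aM * bM - bM * aM)).map s)).trace
          - ϖ ^ r' * (Bs * (As * Cm - Cm * As)).trace) := by
        rw [← Ideal.mem_span_singleton, ← Ideal.span_singleton_pow, ← hϖ.maximalIdeal_eq]
        rw [← Ideal.Quotient.eq_zero_iff_mem]
        rw [show Ideal.Quotient.mk (maximalIdeal O ^ (r' + 1)) = mk from rfl]
        rw [map_sub, hmk1, hmk2, sub_self]
      have hx : (algebraMap O (FractionRing O)) ϖ ≠ 0 := fun h =>
        hϖ.ne_zero (IsFractionRing.injective O (FractionRing O) (by rw [h, map_zero]))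
      have hT1 : (Bs * ((π ^ r' • (aM * bM - bM * aM)).map s)).trace
          = ϖ ^ r' * (Bs * (As * Cm - Cm * As)).trace + ϖ ^ (r' + 1) * e := by
        linear_combination he
      have hsplit : algebraMap O (FractionRing O)
            ((Bs * ((π ^ r' • (aM * bM - bM * aM)).map s)).trace) /
            (algebraMap O (FractionRing O) ϖ) ^ (r' + 1)
          = algebraMap O (FractionRing O) ((Bs * (As * Cm - Cm * As)).trace) /
              algebraMap O (FractionRing O) ϖ
            + algebraMap O (FractionRing O) e := by
        rw [hT1, map_add, map_mul, map_mul, map_pow, map_pow, add_div]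
        congr 1
        · rw [pow_succ]
          exact mul_div_mul_left _ _ (pow_ne_zero r' hx)
        · exact mul_div_cancel_left₀ _ (pow_ne_zero (r' + 1) hx)
      rw [hsplit, AddChar.map_add_eq_mul, hψ1 e, mul_one] at hΨ1
      have htr : (Bs * (As * Cm - Cm * As)).trace = (Gm * Cm).trace := by
        rw [hGm, Matrix.mul_sub, Matrix.sub_mul, Matrix.trace_sub, Matrix.trace_sub]
        congr 1
        · rw [mul_assoc]
        · rw [← mul_assoc, Matrix.trace_mul_comm, ← mul_assoc]
      rwa [htr] at hΨ1
    -- from hFC: β commutes with aM modulo p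
    have hGdvd : ∀ j k, ϖ ∣ Gm j k := by
      intro j k
      apply st19_dvd hϖ ψ hψ2
      intro t
      have h11 := hFC (Matrix.of fun m i => if m = k ∧ i = j then t else 0)
      have htr2 : (Gm * Matrix.of fun m i => if m = k ∧ i = j then t else 0).trace
          = Gm j k * t := by
        classical
        simp [Matrix.trace, Matrix.diag, Matrix.mul_apply, Matrix.of_apply, ite_and,
          mul_ite, mul_zero, Finset.sum_ite_eq]
      rwa [htr2] at h11
    have hβaM : ∀ j k, π ∣ (aM * β - β * aM) j k := by
      intro j k
      have hGmk : Gm.map mk = β * aM - aM * β := by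
        rw [hGm, Matrix.map_sub _ (map_sub mk), Matrix.map_mul, Matrix.map_mul, hmapmk, hmapmk]
      obtain ⟨d, hd⟩ := hGdvd j k
      have h14 : (aM * β - β * aM) j k = -(mk (Gm j k)) := by
        have h12 := congrFun (congrFun hGmk j) k
        rw [Matrix.map_apply] at h12
        rw [Matrix.sub_apply] at h12 ⊢
        linear_combination h12
      rw [h14, hd, map_mul]
      exact dvd_neg.mpr (dvd_mul_right π (mk d))
    obtain ⟨c₀M, hc₀β, hc₀a⟩ := st19_lift hϖ (by omega) bb aM hβaM
    have hcu := hnil c₀M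
    refine ⟨hcu.unit, hcu.unit⁻¹ * u, ?_, ?_, ?_, (mul_inv_cancel_left hcu.unit u).symm⟩
    · rw [hcu.unit_spec, add_mul, mul_add, one_mul, mul_one, Matrix.smul_mul, Matrix.mul_smul,
        hc₀β]
    · intro j k
      rw [hmemiff, hcu.unit_spec, add_sub_cancel_left]
      exact ⟨c₀M j k, by rw [Matrix.smul_apply, smul_eq_mul]⟩
    · intro j k
      rw [hmemiff]
      have hw1 : ((hcu.unit⁻¹ * u : (Matrix (Fin N) (Fin N) (O ⧸ (maximalIdeal O ^ (r' + 1))))ˣ) :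
            Matrix (Fin N) (Fin N) (O ⧸ (maximalIdeal O ^ (r' + 1)))) - 1
          = ((hcu.unit⁻¹ : (Matrix (Fin N) (Fin N) (O ⧸ (maximalIdeal O ^ (r' + 1))))ˣ) :
              Matrix (Fin N) (Fin N) (O ⧸ (maximalIdeal O ^ (r' + 1)))) *
            ((u : Matrix (Fin N) (Fin N) (O ⧸ (maximalIdeal O ^ (r' + 1)))) -
              (hcu.unit : Matrix (Fin N) (Fin N) (O ⧸ (maximalIdeal O ^ (r' + 1))))) := by
        rw [Units.val_mul, mul_sub, hcu.unit.inv_mul]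
      have hw2 : (u : Matrix (Fin N) (Fin N) (O ⧸ (maximalIdeal O ^ (r' + 1)))) -
            (hcu.unit : Matrix (Fin N) (Fin N) (O ⧸ (maximalIdeal O ^ (r' + 1))))
          = π ^ l' • (aM - c₀M) := by
        rw [hU1, hcu.unit_spec, smul_sub]
        abel
      rw [hw1, hw2, Matrix.mul_apply]
      refine Finset.dvd_sum fun i _ => ?_
      rw [Matrix.smul_apply, smul_eq_mul]
      obtain ⟨t, ht⟩ := hc₀a i k
      have h13 : (aM - c₀M) i k = π * (-t) := by
        rw [Matrix.sub_apply] at ht ⊢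
        linear_combination -ht
      have h15 : (π : O ⧸ (maximalIdeal O ^ (r' + 1))) ^ l = π ^ l' * π := by
        rw [hl]; exact pow_succ π l'
      have h16 : π ^ l' * π ∣ π ^ l' * ((aM - c₀M) i k) := mul_dvd_mul dvd_rfl ⟨-t, h13⟩
      exact ((h15.symm ▸ h16 : (π : O ⧸ (maximalIdeal O ^ (r' + 1))) ^ l ∣ _)).mul_left _
end
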